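/- arXiv:math/0012246 — 5 statements merged into one kernel-verified Lean document; each statement's English description precedes it below -/
import Mathlib

section
/- The 7-dimensional complex Lie algebra g_7^{65} with basis X_1,...,X_6, Y_1 and nonzero brackets [X_1,X_j] = X_{j+1} for j = 2,3,4,5; [X_3,X_2] = Y_1; [Y_1,X_3] = X_6; [Y_1,X_2] = X_5 + X_6 (others zero or by antisymmetry) is a nilpotent Lie algebra all of whose derivations are nilpotent endomorphisms (i.e., it is characteristically nilpotent). -/
lemma basis7_eq_zero {g : Type*} [AddCommGroup g] [Module ℂ g] (b : Module.Basis (Fin 7) ℂ g)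
    (c0 c1 c2 c3 c4 c5 c6 : ℂ)
    (h : c0 • b 0 + c1 • b 1 + c2 • b 2 + c3 • b 3 + c4 • b 4 + c5 • b 5 + c6 • b 6 = 0) :
    c0 = 0 ∧ c1 = 0 ∧ c2 = 0 ∧ c3 = 0 ∧ c4 = 0 ∧ c5 = 0 ∧ c6 = 0 := by
  have h2 := Fintype.linearIndependent_iff.mp b.linearIndependent ![c0,c1,c2,c3,c4,c5,c6]
    (by rw [Fin.sum_univ_seven]; simpa using h)
  exact ⟨h2 0, h2 1, h2 2, h2 3, h2 4, h2 5, h2 6⟩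

set_option maxHeartbeats 4000000 in
/-- The 7-dimensional Lie algebra `g_7^{65}` (basis `X_1,...,X_6, Y_1 = b 0,...,b 5, b 6`;
nonzero brackets `⁅X_1,X_j⁆ = X_{j+1}` for `j = 2,3,4,5`, `⁅X_3,X_2⁆ = Y_1`,
`⁅Y_1,X_3⁆ = X_6`, `⁅Y_1,X_2⁆ = X_5 + X_6`) is nilpotent and all of its derivations are
nilpotent endomorphisms. -/
theorem g7_65_characteristically_nilpotent (g : Type*) [LieRing g] [LieAlgebra ℂ g]
    (b : Module.Basis (Fin 7) ℂ g)
    (h01 : ⁅b 0, b 1⁆ = b 2) (h02 : ⁅b 0, b 2⁆ = b 3) (h03 : ⁅b 0, b 3⁆ = b 4)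
    (h04 : ⁅b 0, b 4⁆ = b 5) (h05 : ⁅b 0, b 5⁆ = 0) (h06 : ⁅b 0, b 6⁆ = 0)
    (h21 : ⁅b 2, b 1⁆ = b 6) (h61 : ⁅b 6, b 1⁆ = b 4 + b 5) (h62 : ⁅b 6, b 2⁆ = b 5)
    (h13 : ⁅b 1, b 3⁆ = 0) (h14 : ⁅b 1, b 4⁆ = 0) (h15 : ⁅b 1, b 5⁆ = 0)
    (h23 : ⁅b 2, b 3⁆ = 0) (h24 : ⁅b 2, b 4⁆ = 0) (h25 : ⁅b 2, b 5⁆ = 0)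
    (h34 : ⁅b 3, b 4⁆ = 0) (h35 : ⁅b 3, b 5⁆ = 0) (h36 : ⁅b 3, b 6⁆ = 0)
    (h45 : ⁅b 4, b 5⁆ = 0) (h46 : ⁅b 4, b 6⁆ = 0) (h56 : ⁅b 5, b 6⁆ = 0) :
    LieModule.IsNilpotent g g ∧
      ∀ D : LieDerivation ℂ g g, IsNilpotent D.toLinearMap := by
  have main : ∀ D : LieDerivation ℂ g g, IsNilpotent D.toLinearMap := by
    intro D
    obtain ⟨a, hD⟩ : ∃ a : Fin 7 → Fin 7 → ℂ, ∀ j, D (b j) =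
        a 0 j • b 0 + a 1 j • b 1 + a 2 j • b 2 + a 3 j • b 3 + a 4 j • b 4 + a 5 j • b 5 +
        a 6 j • b 6 := by
      refine ⟨fun i j => b.repr (D (b j)) i, fun j => ?_⟩
      have h := b.sum_repr (D (b j))
      rw [Fin.sum_univ_seven] at h
      exact h.symm
    -- full bracket table
    have T_0_0 : ⁅b 0, b 0⁆ = (0 : g) := lie_self _
    have T_0_1 : ⁅b 0, b 1⁆ = b 2 := h01
    have T_0_2 : ⁅b 0, b 2⁆ = b 3 := h02
    have T_0_3 : ⁅b 0, b 3⁆ = b 4 := h03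
    have T_0_4 : ⁅b 0, b 4⁆ = b 5 := h04
    have T_0_5 : ⁅b 0, b 5⁆ = (0 : g) := h05
    have T_0_6 : ⁅b 0, b 6⁆ = (0 : g) := h06
    have T_1_0 : ⁅b 1, b 0⁆ = -b 2 := by rw [← lie_skew, T_0_1]; try module
    have T_1_1 : ⁅b 1, b 1⁆ = (0 : g) := lie_self _
    have T_1_2 : ⁅b 1, b 2⁆ = -b 6 := by rw [← lie_skew, h21]; try module
    have T_1_3 : ⁅b 1, b 3⁆ = (0 : g) := h13
    have T_1_4 : ⁅b 1, b 4⁆ = (0 : g) := h14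
    have T_1_5 : ⁅b 1, b 5⁆ = (0 : g) := h15
    have T_1_6 : ⁅b 1, b 6⁆ = -b 4 - b 5 := by rw [← lie_skew, h61]; try module
    have T_2_0 : ⁅b 2, b 0⁆ = -b 3 := by rw [← lie_skew, T_0_2]; try module
    have T_2_1 : ⁅b 2, b 1⁆ = b 6 := by rw [← lie_skew, T_1_2]; try module
    have T_2_2 : ⁅b 2, b 2⁆ = (0 : g) := lie_self _
    have T_2_3 : ⁅b 2, b 3⁆ = (0 : g) := h23
    have T_2_4 : ⁅b 2, b 4⁆ = (0 : g) := h24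
    have T_2_5 : ⁅b 2, b 5⁆ = (0 : g) := h25
    have T_2_6 : ⁅b 2, b 6⁆ = -b 5 := by rw [← lie_skew, h62]; try module
    have T_3_0 : ⁅b 3, b 0⁆ = -b 4 := by rw [← lie_skew, T_0_3]; try module
    have T_3_1 : ⁅b 3, b 1⁆ = (0 : g) := by rw [← lie_skew, T_1_3]; try module
    have T_3_2 : ⁅b 3, b 2⁆ = (0 : g) := by rw [← lie_skew, T_2_3]; try module
    have T_3_3 : ⁅b 3, b 3⁆ = (0 : g) := lie_self _
    have T_3_4 : ⁅b 3, b 4⁆ = (0 : g) := h34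
    have T_3_5 : ⁅b 3, b 5⁆ = (0 : g) := h35
    have T_3_6 : ⁅b 3, b 6⁆ = (0 : g) := h36
    have T_4_0 : ⁅b 4, b 0⁆ = -b 5 := by rw [← lie_skew, T_0_4]; try module
    have T_4_1 : ⁅b 4, b 1⁆ = (0 : g) := by rw [← lie_skew, T_1_4]; try module
    have T_4_2 : ⁅b 4, b 2⁆ = (0 : g) := by rw [← lie_skew, T_2_4]; try module
    have T_4_3 : ⁅b 4, b 3⁆ = (0 : g) := by rw [← lie_skew, T_3_4]; try module
    have T_4_4 : ⁅b 4, b 4⁆ = (0 : g) := lie_self _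
    have T_4_5 : ⁅b 4, b 5⁆ = (0 : g) := h45
    have T_4_6 : ⁅b 4, b 6⁆ = (0 : g) := h46
    have T_5_0 : ⁅b 5, b 0⁆ = (0 : g) := by rw [← lie_skew, T_0_5]; try module
    have T_5_1 : ⁅b 5, b 1⁆ = (0 : g) := by rw [← lie_skew, T_1_5]; try module
    have T_5_2 : ⁅b 5, b 2⁆ = (0 : g) := by rw [← lie_skew, T_2_5]; try module
    have T_5_3 : ⁅b 5, b 3⁆ = (0 : g) := by rw [← lie_skew, T_3_5]; try module
    have T_5_4 : ⁅b 5, b 4⁆ = (0 : g) := by rw [← lie_skew, T_4_5]; try module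
    have T_5_5 : ⁅b 5, b 5⁆ = (0 : g) := lie_self _
    have T_5_6 : ⁅b 5, b 6⁆ = (0 : g) := h56
    have T_6_0 : ⁅b 6, b 0⁆ = (0 : g) := by rw [← lie_skew, T_0_6]; try module
    have T_6_1 : ⁅b 6, b 1⁆ = b 4 + b 5 := by rw [← lie_skew, T_1_6]; try module
    have T_6_2 : ⁅b 6, b 2⁆ = b 5 := by rw [← lie_skew, T_2_6]; try module
    have T_6_3 : ⁅b 6, b 3⁆ = (0 : g) := by rw [← lie_skew, T_3_6]; try module
    have T_6_4 : ⁅b 6, b 4⁆ = (0 : g) := by rw [← lie_skew, T_4_6]; try module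
    have T_6_5 : ⁅b 6, b 5⁆ = (0 : g) := by rw [← lie_skew, T_5_6]; try module
    have T_6_6 : ⁅b 6, b 6⁆ = (0 : g) := lie_self _
    -- pair (0,1)
    have V_0_1 := D.apply_lie_eq_add (b 0) (b 1)
    rw [T_0_1] at V_0_1
    simp only [map_add, map_neg, map_sub, map_zero, lie_add, sub_lie, lie_sub, add_lie, lie_smul, smul_lie, lie_zero, zero_lie, lie_neg, neg_lie, smul_add, smul_neg, smul_zero, neg_neg, add_zero, zero_add, hD, T_0_0, T_0_1, T_0_2, T_0_3, T_0_4, T_0_5, T_0_6, T_1_0, T_1_1, T_1_2, T_1_3, T_1_4, T_1_5, T_1_6, T_2_0, T_2_1, T_2_2, T_2_3, T_2_4, T_2_5, T_2_6, T_3_0, T_3_1, T_3_2, T_3_3, T_3_4, T_3_5, T_3_6, T_4_0, T_4_1, T_4_2, T_4_3, T_4_4, T_4_5, T_4_6, T_5_0, T_5_1, T_5_2, T_5_3, T_5_4, T_5_5, T_5_6, T_6_0, T_6_1, T_6_2, T_6_3, T_6_4, T_6_5, T_6_6] at V_0_1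
    have W_0_1 : (a 0 2) • b 0 + (a 1 2) • b 1 + (-a 0 0 - a 1 1 + a 2 2) • b 2 + (-a 2 1 + a 3 2) • b 3 + (-a 3 1 + a 4 2 - a 6 0) • b 4 + (-a 4 1 + a 5 2 - a 6 0) • b 5 + (-a 2 0 + a 6 2) • b 6 = 0 := by
      linear_combination (norm := module) V_0_1
    obtain ⟨E_0_1_0, E_0_1_1, E_0_1_2, E_0_1_3, E_0_1_4, E_0_1_5, E_0_1_6⟩ := basis7_eq_zero b _ _ _ _ _ _ _ W_0_1
    -- pair (0,2)
    have V_0_2 := D.apply_lie_eq_add (b 0) (b 2)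
    rw [T_0_2] at V_0_2
    simp only [map_add, map_neg, map_sub, map_zero, lie_add, sub_lie, lie_sub, add_lie, lie_smul, smul_lie, lie_zero, zero_lie, lie_neg, neg_lie, smul_add, smul_neg, smul_zero, neg_neg, add_zero, zero_add, hD, T_0_0, T_0_1, T_0_2, T_0_3, T_0_4, T_0_5, T_0_6, T_1_0, T_1_1, T_1_2, T_1_3, T_1_4, T_1_5, T_1_6, T_2_0, T_2_1, T_2_2, T_2_3, T_2_4, T_2_5, T_2_6, T_3_0, T_3_1, T_3_2, T_3_3, T_3_4, T_3_5, T_3_6, T_4_0, T_4_1, T_4_2, T_4_3, T_4_4, T_4_5, T_4_6, T_5_0, T_5_1, T_5_2, T_5_3, T_5_4, T_5_5, T_5_6, T_6_0, T_6_1, T_6_2, T_6_3, T_6_4, T_6_5, T_6_6] at V_0_2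
    have W_0_2 : (a 0 3) • b 0 + (a 1 3) • b 1 + (-a 1 2 + a 2 3) • b 2 + (-a 0 0 - a 2 2 + a 3 3) • b 3 + (-a 3 2 + a 4 3) • b 4 + (-a 4 2 + a 5 3 - a 6 0) • b 5 + (a 1 0 + a 6 3) • b 6 = 0 := by
      linear_combination (norm := module) V_0_2
    obtain ⟨E_0_2_0, E_0_2_1, E_0_2_2, E_0_2_3, E_0_2_4, E_0_2_5, E_0_2_6⟩ := basis7_eq_zero b _ _ _ _ _ _ _ W_0_2
    -- pair (0,3)
    have V_0_3 := D.apply_lie_eq_add (b 0) (b 3)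
    rw [T_0_3] at V_0_3
    simp only [map_add, map_neg, map_sub, map_zero, lie_add, sub_lie, lie_sub, add_lie, lie_smul, smul_lie, lie_zero, zero_lie, lie_neg, neg_lie, smul_add, smul_neg, smul_zero, neg_neg, add_zero, zero_add, hD, T_0_0, T_0_1, T_0_2, T_0_3, T_0_4, T_0_5, T_0_6, T_1_0, T_1_1, T_1_2, T_1_3, T_1_4, T_1_5, T_1_6, T_2_0, T_2_1, T_2_2, T_2_3, T_2_4, T_2_5, T_2_6, T_3_0, T_3_1, T_3_2, T_3_3, T_3_4, T_3_5, T_3_6, T_4_0, T_4_1, T_4_2, T_4_3, T_4_4, T_4_5, T_4_6, T_5_0, T_5_1, T_5_2, T_5_3, T_5_4, T_5_5, T_5_6, T_6_0, T_6_1, T_6_2, T_6_3, T_6_4, T_6_5, T_6_6] at V_0_3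
    have W_0_3 : (a 0 4) • b 0 + (a 1 4) • b 1 + (-a 1 3 + a 2 4) • b 2 + (-a 2 3 + a 3 4) • b 3 + (-a 0 0 - a 3 3 + a 4 4) • b 4 + (-a 4 3 + a 5 4) • b 5 + (a 6 4) • b 6 = 0 := by
      linear_combination (norm := module) V_0_3
    obtain ⟨E_0_3_0, E_0_3_1, E_0_3_2, E_0_3_3, E_0_3_4, E_0_3_5, E_0_3_6⟩ := basis7_eq_zero b _ _ _ _ _ _ _ W_0_3
    -- pair (0,4)
    have V_0_4 := D.apply_lie_eq_add (b 0) (b 4)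
    rw [T_0_4] at V_0_4
    simp only [map_add, map_neg, map_sub, map_zero, lie_add, sub_lie, lie_sub, add_lie, lie_smul, smul_lie, lie_zero, zero_lie, lie_neg, neg_lie, smul_add, smul_neg, smul_zero, neg_neg, add_zero, zero_add, hD, T_0_0, T_0_1, T_0_2, T_0_3, T_0_4, T_0_5, T_0_6, T_1_0, T_1_1, T_1_2, T_1_3, T_1_4, T_1_5, T_1_6, T_2_0, T_2_1, T_2_2, T_2_3, T_2_4, T_2_5, T_2_6, T_3_0, T_3_1, T_3_2, T_3_3, T_3_4, T_3_5, T_3_6, T_4_0, T_4_1, T_4_2, T_4_3, T_4_4, T_4_5, T_4_6, T_5_0, T_5_1, T_5_2, T_5_3, T_5_4, T_5_5, T_5_6, T_6_0, T_6_1, T_6_2, T_6_3, T_6_4, T_6_5, T_6_6] at V_0_4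
    have W_0_4 : (a 0 5) • b 0 + (a 1 5) • b 1 + (-a 1 4 + a 2 5) • b 2 + (-a 2 4 + a 3 5) • b 3 + (-a 3 4 + a 4 5) • b 4 + (-a 0 0 - a 4 4 + a 5 5) • b 5 + (a 6 5) • b 6 = 0 := by
      linear_combination (norm := module) V_0_4
    obtain ⟨E_0_4_0, E_0_4_1, E_0_4_2, E_0_4_3, E_0_4_4, E_0_4_5, E_0_4_6⟩ := basis7_eq_zero b _ _ _ _ _ _ _ W_0_4
    -- pair (0,5)
    have V_0_5 := D.apply_lie_eq_add (b 0) (b 5)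
    rw [T_0_5] at V_0_5
    simp only [map_add, map_neg, map_sub, map_zero, lie_add, sub_lie, lie_sub, add_lie, lie_smul, smul_lie, lie_zero, zero_lie, lie_neg, neg_lie, smul_add, smul_neg, smul_zero, neg_neg, add_zero, zero_add, hD, T_0_0, T_0_1, T_0_2, T_0_3, T_0_4, T_0_5, T_0_6, T_1_0, T_1_1, T_1_2, T_1_3, T_1_4, T_1_5, T_1_6, T_2_0, T_2_1, T_2_2, T_2_3, T_2_4, T_2_5, T_2_6, T_3_0, T_3_1, T_3_2, T_3_3, T_3_4, T_3_5, T_3_6, T_4_0, T_4_1, T_4_2, T_4_3, T_4_4, T_4_5, T_4_6, T_5_0, T_5_1, T_5_2, T_5_3, T_5_4, T_5_5, T_5_6, T_6_0, T_6_1, T_6_2, T_6_3, T_6_4, T_6_5, T_6_6] at V_0_5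
    have W_0_5 : ((0 : ℂ)) • b 0 + ((0 : ℂ)) • b 1 + (-a 1 5) • b 2 + (-a 2 5) • b 3 + (-a 3 5) • b 4 + (-a 4 5) • b 5 + ((0 : ℂ)) • b 6 = 0 := by
      linear_combination (norm := module) V_0_5
    obtain ⟨E_0_5_0, E_0_5_1, E_0_5_2, E_0_5_3, E_0_5_4, E_0_5_5, E_0_5_6⟩ := basis7_eq_zero b _ _ _ _ _ _ _ W_0_5
    -- pair (0,6)
    have V_0_6 := D.apply_lie_eq_add (b 0) (b 6)
    rw [T_0_6] at V_0_6
    simp only [map_add, map_neg, map_sub, map_zero, lie_add, sub_lie, lie_sub, add_lie, lie_smul, smul_lie, lie_zero, zero_lie, lie_neg, neg_lie, smul_add, smul_neg, smul_zero, neg_neg, add_zero, zero_add, hD, T_0_0, T_0_1, T_0_2, T_0_3, T_0_4, T_0_5, T_0_6, T_1_0, T_1_1, T_1_2, T_1_3, T_1_4, T_1_5, T_1_6, T_2_0, T_2_1, T_2_2, T_2_3, T_2_4, T_2_5, T_2_6, T_3_0, T_3_1, T_3_2, T_3_3, T_3_4, T_3_5, T_3_6, T_4_0, T_4_1, T_4_2,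 T_4_3, T_4_4, T_4_5, T_4_6, T_5_0, T_5_1, T_5_2, T_5_3, T_5_4, T_5_5, T_5_6, T_6_0, T_6_1, T_6_2, T_6_3, T_6_4, T_6_5, T_6_6] at V_0_6
    have W_0_6 : ((0 : ℂ)) • b 0 + ((0 : ℂ)) • b 1 + (-a 1 6) • b 2 + (-a 2 6) • b 3 + (a 1 0 - a 3 6) • b 4 + (a 1 0 + a 2 0 - a 4 6) • b 5 + ((0 : ℂ)) • b 6 = 0 := by
      linear_combination (norm := module) V_0_6
    obtain ⟨E_0_6_0, E_0_6_1, E_0_6_2, E_0_6_3, E_0_6_4, E_0_6_5, E_0_6_6⟩ := basis7_eq_zero b _ _ _ _ _ _ _ W_0_6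
    -- pair (1,2)
    have V_1_2 := D.apply_lie_eq_add (b 1) (b 2)
    rw [T_1_2] at V_1_2
    simp only [map_add, map_neg, map_sub, map_zero, lie_add, sub_lie, lie_sub, add_lie, lie_smul, smul_lie, lie_zero, zero_lie, lie_neg, neg_lie, smul_add, smul_neg, smul_zero, neg_neg, add_zero, zero_add, hD, T_0_0, T_0_1, T_0_2, T_0_3, T_0_4, T_0_5, T_0_6, T_1_0, T_1_1, T_1_2, T_1_3, T_1_4, T_1_5, T_1_6, T_2_0, T_2_1, T_2_2, T_2_3, T_2_4, T_2_5, T_2_6, T_3_0, T_3_1, T_3_2, T_3_3, T_3_4, T_3_5, T_3_6, T_4_0, T_4_1, T_4_2, T_4_3, T_4_4, T_4_5, T_4_6, T_5_0, T_5_1, T_5_2, T_5_3, T_5_4, T_5_5, T_5_6, T_6_0, T_6_1, T_6_2, T_6_3, T_6_4, T_6_5, T_6_6] at V_1_2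
    have W_1_2 : (-a 0 6) • b 0 + (-a 1 6) • b 1 + (a 0 2 - a 2 6) • b 2 + (-a 0 1 - a 3 6) • b 3 + (-a 4 6 + a 6 2) • b 4 + (-a 5 6 - a 6 1 + a 6 2) • b 5 + (a 1 1 + a 2 2 - a 6 6) • b 6 = 0 := by
      linear_combination (norm := module) V_1_2
    obtain ⟨E_1_2_0, E_1_2_1, E_1_2_2, E_1_2_3, E_1_2_4, E_1_2_5, E_1_2_6⟩ := basis7_eq_zero b _ _ _ _ _ _ _ W_1_2
    -- pair (1,3)
    have V_1_3 := D.apply_lie_eq_add (b 1) (b 3)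
    rw [T_1_3] at V_1_3
    simp only [map_add, map_neg, map_sub, map_zero, lie_add, sub_lie, lie_sub, add_lie, lie_smul, smul_lie, lie_zero, zero_lie, lie_neg, neg_lie, smul_add, smul_neg, smul_zero, neg_neg, add_zero, zero_add, hD, T_0_0, T_0_1, T_0_2, T_0_3, T_0_4, T_0_5, T_0_6, T_1_0, T_1_1, T_1_2, T_1_3, T_1_4, T_1_5, T_1_6, T_2_0, T_2_1, T_2_2, T_2_3, T_2_4, T_2_5, T_2_6, T_3_0, T_3_1, T_3_2, T_3_3, T_3_4, T_3_5, T_3_6, T_4_0, T_4_1, T_4_2, T_4_3, T_4_4, T_4_5, T_4_6, T_5_0, T_5_1, T_5_2, T_5_3, T_5_4, T_5_5, T_5_6, T_6_0, T_6_1, T_6_2, T_6_3, T_6_4, T_6_5, T_6_6] at V_1_3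
    have W_1_3 : ((0 : ℂ)) • b 0 + ((0 : ℂ)) • b 1 + (a 0 3) • b 2 + ((0 : ℂ)) • b 3 + (-a 0 1 + a 6 3) • b 4 + (a 6 3) • b 5 + (a 2 3) • b 6 = 0 := by
      linear_combination (norm := module) V_1_3
    obtain ⟨E_1_3_0, E_1_3_1, E_1_3_2, E_1_3_3, E_1_3_4, E_1_3_5, E_1_3_6⟩ := basis7_eq_zero b _ _ _ _ _ _ _ W_1_3
    -- pair (1,4)
    have V_1_4 := D.apply_lie_eq_add (b 1) (b 4)
    rw [T_1_4] at V_1_4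
    simp only [map_add, map_neg, map_sub, map_zero, lie_add, sub_lie, lie_sub, add_lie, lie_smul, smul_lie, lie_zero, zero_lie, lie_neg, neg_lie, smul_add, smul_neg, smul_zero, neg_neg, add_zero, zero_add, hD, T_0_0, T_0_1, T_0_2, T_0_3, T_0_4, T_0_5, T_0_6, T_1_0, T_1_1, T_1_2, T_1_3, T_1_4, T_1_5, T_1_6, T_2_0, T_2_1, T_2_2, T_2_3, T_2_4, T_2_5, T_2_6, T_3_0, T_3_1, T_3_2, T_3_3, T_3_4, T_3_5, T_3_6, T_4_0, T_4_1, T_4_2, T_4_3, T_4_4, T_4_5, T_4_6, T_5_0, T_5_1, T_5_2, T_5_3, T_5_4, T_5_5, T_5_6, T_6_0, T_6_1, T_6_2, T_6_3, T_6_4, T_6_5, T_6_6] at V_1_4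
    have W_1_4 : ((0 : ℂ)) • b 0 + ((0 : ℂ)) • b 1 + (a 0 4) • b 2 + ((0 : ℂ)) • b 3 + (a 6 4) • b 4 + (-a 0 1 + a 6 4) • b 5 + (a 2 4) • b 6 = 0 := by
      linear_combination (norm := module) V_1_4
    obtain ⟨E_1_4_0, E_1_4_1, E_1_4_2, E_1_4_3, E_1_4_4, E_1_4_5, E_1_4_6⟩ := basis7_eq_zero b _ _ _ _ _ _ _ W_1_4
    -- pair (1,5)
    have V_1_5 := D.apply_lie_eq_add (b 1) (b 5)
    rw [T_1_5] at V_1_5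
    simp only [map_add, map_neg, map_sub, map_zero, lie_add, sub_lie, lie_sub, add_lie, lie_smul, smul_lie, lie_zero, zero_lie, lie_neg, neg_lie, smul_add, smul_neg, smul_zero, neg_neg, add_zero, zero_add, hD, T_0_0, T_0_1, T_0_2, T_0_3, T_0_4, T_0_5, T_0_6, T_1_0, T_1_1, T_1_2, T_1_3, T_1_4, T_1_5, T_1_6, T_2_0, T_2_1, T_2_2, T_2_3, T_2_4, T_2_5, T_2_6, T_3_0, T_3_1, T_3_2, T_3_3, T_3_4, T_3_5, T_3_6, T_4_0, T_4_1, T_4_2, T_4_3, T_4_4, T_4_5, T_4_6, T_5_0, T_5_1, T_5_2, T_5_3, T_5_4, T_5_5, T_5_6, T_6_0, T_6_1, T_6_2, T_6_3, T_6_4, T_6_5, T_6_6] at V_1_5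
    have W_1_5 : ((0 : ℂ)) • b 0 + ((0 : ℂ)) • b 1 + (a 0 5) • b 2 + ((0 : ℂ)) • b 3 + (a 6 5) • b 4 + (a 6 5) • b 5 + (a 2 5) • b 6 = 0 := by
      linear_combination (norm := module) V_1_5
    obtain ⟨E_1_5_0, E_1_5_1, E_1_5_2, E_1_5_3, E_1_5_4, E_1_5_5, E_1_5_6⟩ := basis7_eq_zero b _ _ _ _ _ _ _ W_1_5
    -- pair (1,6)
    have V_1_6 := D.apply_lie_eq_add (b 1) (b 6)
    rw [T_1_6] at V_1_6
    simp only [map_add, map_neg, map_sub, map_zero, lie_add, sub_lie, lie_sub, add_lie, lie_smul, smul_lie, lie_zero, zero_lie, lie_neg, neg_lie, smul_add, smul_neg, smul_zero, neg_neg, add_zero, zero_add, hD, T_0_0, T_0_1, T_0_2, T_0_3, T_0_4, T_0_5, T_0_6, T_1_0, T_1_1, T_1_2, T_1_3, T_1_4, T_1_5, T_1_6, T_2_0, T_2_1, T_2_2, T_2_3, T_2_4, T_2_5, T_2_6, T_3_0, T_3_1, T_3_2, T_3_3, T_3_4, T_3_5, T_3_6, T_4_0, T_4_1, T_4_2, T_4_3,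 T_4_4, T_4_5, T_4_6, T_5_0, T_5_1, T_5_2, T_5_3, T_5_4, T_5_5, T_5_6, T_6_0, T_6_1, T_6_2, T_6_3, T_6_4, T_6_5, T_6_6] at V_1_6
    have W_1_6 : (-a 0 4 - a 0 5) • b 0 + (-a 1 4 - a 1 5) • b 1 + (a 0 6 - a 2 4 - a 2 5) • b 2 + (-a 3 4 - a 3 5) • b 3 + (a 1 1 - a 4 4 - a 4 5 + a 6 6) • b 4 + (a 1 1 + a 2 1 - a 5 4 - a 5 5 + a 6 6) • b 5 + (a 2 6 - a 6 4 - a 6 5) • b 6 = 0 := by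
      linear_combination (norm := module) V_1_6
    obtain ⟨E_1_6_0, E_1_6_1, E_1_6_2, E_1_6_3, E_1_6_4, E_1_6_5, E_1_6_6⟩ := basis7_eq_zero b _ _ _ _ _ _ _ W_1_6
    -- pair (2,3)
    have V_2_3 := D.apply_lie_eq_add (b 2) (b 3)
    rw [T_2_3] at V_2_3
    simp only [map_add, map_neg, map_sub, map_zero, lie_add, sub_lie, lie_sub, add_lie, lie_smul, smul_lie, lie_zero, zero_lie, lie_neg, neg_lie, smul_add, smul_neg, smul_zero, neg_neg, add_zero, zero_add, hD, T_0_0, T_0_1, T_0_2, T_0_3, T_0_4, T_0_5, T_0_6, T_1_0, T_1_1, T_1_2, T_1_3, T_1_4, T_1_5, T_1_6, T_2_0, T_2_1, T_2_2, T_2_3, T_2_4, T_2_5, T_2_6, T_3_0, T_3_1, T_3_2, T_3_3, T_3_4, T_3_5, T_3_6, T_4_0, T_4_1, T_4_2, T_4_3, T_4_4, T_4_5, T_4_6, T_5_0, T_5_1, T_5_2, T_5_3, T_5_4, T_5_5, T_5_6, T_6_0, T_6_1, T_6_2, T_6_3, T_6_4, T_6_5, T_6_6] at V_2_3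
    have W_2_3 : ((0 : ℂ)) • b 0 + ((0 : ℂ)) • b 1 + ((0 : ℂ)) • b 2 + (a 0 3) • b 3 + (-a 0 2) • b 4 + (a 6 3) • b 5 + (-a 1 3) • b 6 = 0 := by
      linear_combination (norm := module) V_2_3
    obtain ⟨E_2_3_0, E_2_3_1, E_2_3_2, E_2_3_3, E_2_3_4, E_2_3_5, E_2_3_6⟩ := basis7_eq_zero b _ _ _ _ _ _ _ W_2_3
    -- pair (2,4)
    have V_2_4 := D.apply_lie_eq_add (b 2) (b 4)
    rw [T_2_4] at V_2_4
    simp only [map_add, map_neg, map_sub, map_zero, lie_add, sub_lie, lie_sub, add_lie, lie_smul, smul_lie, lie_zero, zero_lie, lie_neg, neg_lie, smul_add, smul_neg, smul_zero, neg_neg, add_zero, zero_add, hD, T_0_0, T_0_1, T_0_2, T_0_3, T_0_4, T_0_5, T_0_6, T_1_0, T_1_1, T_1_2, T_1_3, T_1_4, T_1_5, T_1_6, T_2_0, T_2_1, T_2_2, T_2_3, T_2_4, T_2_5, T_2_6, T_3_0, T_3_1, T_3_2, T_3_3, T_3_4, T_3_5, T_3_6, T_4_0, T_4_1, T_4_2,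 T_4_3, T_4_4, T_4_5, T_4_6, T_5_0, T_5_1, T_5_2, T_5_3, T_5_4, T_5_5, T_5_6, T_6_0, T_6_1, T_6_2, T_6_3, T_6_4, T_6_5, T_6_6] at V_2_4
    have W_2_4 : ((0 : ℂ)) • b 0 + ((0 : ℂ)) • b 1 + ((0 : ℂ)) • b 2 + (a 0 4) • b 3 + ((0 : ℂ)) • b 4 + (-a 0 2 + a 6 4) • b 5 + (-a 1 4) • b 6 = 0 := by
      linear_combination (norm := module) V_2_4
    obtain ⟨E_2_4_0, E_2_4_1, E_2_4_2, E_2_4_3, E_2_4_4, E_2_4_5, E_2_4_6⟩ := basis7_eq_zero b _ _ _ _ _ _ _ W_2_4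
    -- pair (2,5)
    have V_2_5 := D.apply_lie_eq_add (b 2) (b 5)
    rw [T_2_5] at V_2_5
    simp only [map_add, map_neg, map_sub, map_zero, lie_add, sub_lie, lie_sub, add_lie, lie_smul, smul_lie, lie_zero, zero_lie, lie_neg, neg_lie, smul_add, smul_neg, smul_zero, neg_neg, add_zero, zero_add, hD, T_0_0, T_0_1, T_0_2, T_0_3, T_0_4, T_0_5, T_0_6, T_1_0, T_1_1, T_1_2, T_1_3, T_1_4, T_1_5, T_1_6, T_2_0, T_2_1, T_2_2, T_2_3, T_2_4, T_2_5, T_2_6, T_3_0, T_3_1, T_3_2, T_3_3, T_3_4, T_3_5, T_3_6, T_4_0, T_4_1, T_4_2, T_4_3, T_4_4, T_4_5, T_4_6, T_5_0, T_5_1, T_5_2, T_5_3, T_5_4, T_5_5, T_5_6, T_6_0, T_6_1, T_6_2, T_6_3, T_6_4, T_6_5, T_6_6] at V_2_5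
    have W_2_5 : ((0 : ℂ)) • b 0 + ((0 : ℂ)) • b 1 + ((0 : ℂ)) • b 2 + (a 0 5) • b 3 + ((0 : ℂ)) • b 4 + (a 6 5) • b 5 + (-a 1 5) • b 6 = 0 := by
      linear_combination (norm := module) V_2_5
    obtain ⟨E_2_5_0, E_2_5_1, E_2_5_2, E_2_5_3, E_2_5_4, E_2_5_5, E_2_5_6⟩ := basis7_eq_zero b _ _ _ _ _ _ _ W_2_5
    -- pair (2,6)
    have V_2_6 := D.apply_lie_eq_add (b 2) (b 6)
    rw [T_2_6] at V_2_6
    simp only [map_add, map_neg, map_sub, map_zero, lie_add, sub_lie, lie_sub, add_lie, lie_smul, smul_lie, lie_zero, zero_lie, lie_neg, neg_lie, smul_add, smul_neg, smul_zero, neg_neg, add_zero, zero_add, hD, T_0_0, T_0_1, T_0_2, T_0_3, T_0_4, T_0_5, T_0_6, T_1_0, T_1_1, T_1_2, T_1_3, T_1_4, T_1_5, T_1_6, T_2_0, T_2_1, T_2_2, T_2_3, T_2_4, T_2_5, T_2_6, T_3_0, T_3_1, T_3_2, T_3_3, T_3_4, T_3_5, T_3_6, T_4_0, T_4_1, T_4_2,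 T_4_3, T_4_4, T_4_5, T_4_6, T_5_0, T_5_1, T_5_2, T_5_3, T_5_4, T_5_5, T_5_6, T_6_0, T_6_1, T_6_2, T_6_3, T_6_4, T_6_5, T_6_6] at V_2_6
    have W_2_6 : (-a 0 5) • b 0 + (-a 1 5) • b 1 + (-a 2 5) • b 2 + (a 0 6 - a 3 5) • b 3 + (a 1 2 - a 4 5) • b 4 + (a 1 2 + a 2 2 - a 5 5 + a 6 6) • b 5 + (-a 1 6 - a 6 5) • b 6 = 0 := by
      linear_combination (norm := module) V_2_6
    obtain ⟨E_2_6_0, E_2_6_1, E_2_6_2, E_2_6_3, E_2_6_4, E_2_6_5, E_2_6_6⟩ := basis7_eq_zero b _ _ _ _ _ _ _ W_2_6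
    -- pair (3,4)
    have V_3_4 := D.apply_lie_eq_add (b 3) (b 4)
    rw [T_3_4] at V_3_4
    simp only [map_add, map_neg, map_sub, map_zero, lie_add, sub_lie, lie_sub, add_lie, lie_smul, smul_lie, lie_zero, zero_lie, lie_neg, neg_lie, smul_add, smul_neg, smul_zero, neg_neg, add_zero, zero_add, hD, T_0_0, T_0_1, T_0_2, T_0_3, T_0_4, T_0_5, T_0_6, T_1_0, T_1_1, T_1_2, T_1_3, T_1_4, T_1_5, T_1_6, T_2_0, T_2_1, T_2_2, T_2_3, T_2_4, T_2_5, T_2_6, T_3_0, T_3_1, T_3_2, T_3_3, T_3_4, T_3_5, T_3_6, T_4_0, T_4_1, T_4_2, T_4_3, T_4_4, T_4_5, T_4_6, T_5_0, T_5_1, T_5_2, T_5_3, T_5_4, T_5_5, T_5_6, T_6_0, T_6_1, T_6_2, T_6_3, T_6_4, T_6_5, T_6_6] at V_3_4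
    have W_3_4 : ((0 : ℂ)) • b 0 + ((0 : ℂ)) • b 1 + ((0 : ℂ)) • b 2 + ((0 : ℂ)) • b 3 + (a 0 4) • b 4 + (-a 0 3) • b 5 + ((0 : ℂ)) • b 6 = 0 := by
      linear_combination (norm := module) V_3_4
    obtain ⟨E_3_4_0, E_3_4_1, E_3_4_2, E_3_4_3, E_3_4_4, E_3_4_5, E_3_4_6⟩ := basis7_eq_zero b _ _ _ _ _ _ _ W_3_4
    -- pair (3,5)
    have V_3_5 := D.apply_lie_eq_add (b 3) (b 5)
    rw [T_3_5] at V_3_5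
    simp only [map_add, map_neg, map_sub, map_zero, lie_add, sub_lie, lie_sub, add_lie, lie_smul, smul_lie, lie_zero, zero_lie, lie_neg, neg_lie, smul_add, smul_neg, smul_zero, neg_neg, add_zero, zero_add, hD, T_0_0, T_0_1, T_0_2, T_0_3, T_0_4, T_0_5, T_0_6, T_1_0, T_1_1, T_1_2, T_1_3, T_1_4, T_1_5, T_1_6, T_2_0, T_2_1, T_2_2, T_2_3, T_2_4, T_2_5, T_2_6, T_3_0, T_3_1, T_3_2, T_3_3, T_3_4, T_3_5, T_3_6, T_4_0, T_4_1, T_4_2, T_4_3, T_4_4, T_4_5, T_4_6, T_5_0, T_5_1, T_5_2, T_5_3, T_5_4, T_5_5, T_5_6, T_6_0, T_6_1, T_6_2, T_6_3, T_6_4, T_6_5, T_6_6] at V_3_5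
    have W_3_5 : ((0 : ℂ)) • b 0 + ((0 : ℂ)) • b 1 + ((0 : ℂ)) • b 2 + ((0 : ℂ)) • b 3 + (a 0 5) • b 4 + ((0 : ℂ)) • b 5 + ((0 : ℂ)) • b 6 = 0 := by
      linear_combination (norm := module) V_3_5
    obtain ⟨E_3_5_0, E_3_5_1, E_3_5_2, E_3_5_3, E_3_5_4, E_3_5_5, E_3_5_6⟩ := basis7_eq_zero b _ _ _ _ _ _ _ W_3_5
    -- pair (3,6)
    have V_3_6 := D.apply_lie_eq_add (b 3) (b 6)
    rw [T_3_6] at V_3_6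
    simp only [map_add, map_neg, map_sub, map_zero, lie_add, sub_lie, lie_sub, add_lie, lie_smul, smul_lie, lie_zero, zero_lie, lie_neg, neg_lie, smul_add, smul_neg, smul_zero, neg_neg, add_zero, zero_add, hD, T_0_0, T_0_1, T_0_2, T_0_3, T_0_4, T_0_5, T_0_6, T_1_0, T_1_1, T_1_2, T_1_3, T_1_4, T_1_5, T_1_6, T_2_0, T_2_1, T_2_2, T_2_3, T_2_4, T_2_5, T_2_6, T_3_0, T_3_1, T_3_2, T_3_3, T_3_4, T_3_5, T_3_6, T_4_0, T_4_1, T_4_2, T_4_3, T_4_4, T_4_5, T_4_6, T_5_0, T_5_1, T_5_2, T_5_3, T_5_4, T_5_5, T_5_6, T_6_0, T_6_1, T_6_2, T_6_3, T_6_4, T_6_5, T_6_6] at V_3_6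
    have W_3_6 : ((0 : ℂ)) • b 0 + ((0 : ℂ)) • b 1 + ((0 : ℂ)) • b 2 + ((0 : ℂ)) • b 3 + (a 0 6 + a 1 3) • b 4 + (a 1 3 + a 2 3) • b 5 + ((0 : ℂ)) • b 6 = 0 := by
      linear_combination (norm := module) V_3_6
    obtain ⟨E_3_6_0, E_3_6_1, E_3_6_2, E_3_6_3, E_3_6_4, E_3_6_5, E_3_6_6⟩ := basis7_eq_zero b _ _ _ _ _ _ _ W_3_6
    -- pair (4,5)
    have V_4_5 := D.apply_lie_eq_add (b 4) (b 5)
    rw [T_4_5] at V_4_5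
    simp only [map_add, map_neg, map_sub, map_zero, lie_add, sub_lie, lie_sub, add_lie, lie_smul, smul_lie, lie_zero, zero_lie, lie_neg, neg_lie, smul_add, smul_neg, smul_zero, neg_neg, add_zero, zero_add, hD, T_0_0, T_0_1, T_0_2, T_0_3, T_0_4, T_0_5, T_0_6, T_1_0, T_1_1, T_1_2, T_1_3, T_1_4, T_1_5, T_1_6, T_2_0, T_2_1, T_2_2, T_2_3, T_2_4, T_2_5, T_2_6, T_3_0, T_3_1, T_3_2, T_3_3, T_3_4, T_3_5, T_3_6, T_4_0, T_4_1, T_4_2, T_4_3, T_4_4, T_4_5, T_4_6, T_5_0, T_5_1, T_5_2, T_5_3, T_5_4, T_5_5, T_5_6, T_6_0, T_6_1, T_6_2, T_6_3, T_6_4, T_6_5, T_6_6] at V_4_5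
    have W_4_5 : ((0 : ℂ)) • b 0 + ((0 : ℂ)) • b 1 + ((0 : ℂ)) • b 2 + ((0 : ℂ)) • b 3 + ((0 : ℂ)) • b 4 + (a 0 5) • b 5 + ((0 : ℂ)) • b 6 = 0 := by
      linear_combination (norm := module) V_4_5
    obtain ⟨E_4_5_0, E_4_5_1, E_4_5_2, E_4_5_3, E_4_5_4, E_4_5_5, E_4_5_6⟩ := basis7_eq_zero b _ _ _ _ _ _ _ W_4_5
    -- pair (4,6)
    have V_4_6 := D.apply_lie_eq_add (b 4) (b 6)
    rw [T_4_6] at V_4_6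
    simp only [map_add, map_neg, map_sub, map_zero, lie_add, sub_lie, lie_sub, add_lie, lie_smul, smul_lie, lie_zero, zero_lie, lie_neg, neg_lie, smul_add, smul_neg, smul_zero, neg_neg, add_zero, zero_add, hD, T_0_0, T_0_1, T_0_2, T_0_3, T_0_4, T_0_5, T_0_6, T_1_0, T_1_1, T_1_2, T_1_3, T_1_4, T_1_5, T_1_6, T_2_0, T_2_1, T_2_2, T_2_3, T_2_4, T_2_5, T_2_6, T_3_0, T_3_1, T_3_2, T_3_3, T_3_4, T_3_5, T_3_6, T_4_0, T_4_1, T_4_2, T_4_3, T_4_4, T_4_5, T_4_6, T_5_0, T_5_1, T_5_2, T_5_3, T_5_4, T_5_5, T_5_6, T_6_0, T_6_1, T_6_2, T_6_3, T_6_4, T_6_5, T_6_6] at V_4_6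
    have W_4_6 : ((0 : ℂ)) • b 0 + ((0 : ℂ)) • b 1 + ((0 : ℂ)) • b 2 + ((0 : ℂ)) • b 3 + (a 1 4) • b 4 + (a 0 6 + a 1 4 + a 2 4) • b 5 + ((0 : ℂ)) • b 6 = 0 := by
      linear_combination (norm := module) V_4_6
    obtain ⟨E_4_6_0, E_4_6_1, E_4_6_2, E_4_6_3, E_4_6_4, E_4_6_5, E_4_6_6⟩ := basis7_eq_zero b _ _ _ _ _ _ _ W_4_6
    -- pair (5,6)
    have V_5_6 := D.apply_lie_eq_add (b 5) (b 6)
    rw [T_5_6] at V_5_6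
    simp only [map_add, map_neg, map_sub, map_zero, lie_add, sub_lie, lie_sub, add_lie, lie_smul, smul_lie, lie_zero, zero_lie, lie_neg, neg_lie, smul_add, smul_neg, smul_zero, neg_neg, add_zero, zero_add, hD, T_0_0, T_0_1, T_0_2, T_0_3, T_0_4, T_0_5, T_0_6, T_1_0, T_1_1, T_1_2, T_1_3, T_1_4, T_1_5, T_1_6, T_2_0, T_2_1, T_2_2, T_2_3, T_2_4, T_2_5, T_2_6, T_3_0, T_3_1, T_3_2, T_3_3, T_3_4, T_3_5, T_3_6, T_4_0, T_4_1, T_4_2, T_4_3, T_4_4, T_4_5, T_4_6, T_5_0, T_5_1, T_5_2, T_5_3, T_5_4, T_5_5, T_5_6, T_6_0, T_6_1, T_6_2, T_6_3, T_6_4, T_6_5, T_6_6] at V_5_6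
    have W_5_6 : ((0 : ℂ)) • b 0 + ((0 : ℂ)) • b 1 + ((0 : ℂ)) • b 2 + ((0 : ℂ)) • b 3 + (a 1 5) • b 4 + (a 1 5 + a 2 5) • b 5 + ((0 : ℂ)) • b 6 = 0 := by
      linear_combination (norm := module) V_5_6
    obtain ⟨E_5_6_0, E_5_6_1, E_5_6_2, E_5_6_3, E_5_6_4, E_5_6_5, E_5_6_6⟩ := basis7_eq_zero b _ _ _ _ _ _ _ W_5_6
    -- vanishing matrix entries
    have z_0_0 : a 0 0 = 0 := by linear_combination -E_0_1_3 - E_0_2_4 - E_0_3_5 - E_0_4_5 - E_0_5_5 + E_1_6_4 - E_1_6_5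
    have z_0_1 : a 0 1 = 0 := by linear_combination -E_0_1_6 + E_0_6_4 - E_0_6_5 - E_1_2_3 + E_1_2_4
    have z_0_2 : a 0 2 = 0 := by linear_combination E_0_1_0
    have z_0_3 : a 0 3 = 0 := by linear_combination E_0_2_0
    have z_0_4 : a 0 4 = 0 := by linear_combination E_0_3_0
    have z_0_5 : a 0 5 = 0 := by linear_combination E_0_4_0
    have z_0_6 : a 0 6 = 0 := by linear_combination -E_1_2_0
    have z_1_0 : a 1 0 = 0 := by linear_combination E_0_1_6 + E_0_6_5 - E_1_2_4
    have z_1_1 : a 1 1 = 0 := by linear_combination -E_0_1_3 + (1/2) * E_0_2_3 - E_0_2_4 + (1/2) * E_0_3_4 - E_0_3_5 - E_0_4_5 - (3/2) * E_0_5_5 + (1/2) * E_1_2_6 + (3/2) * E_1_6_4 - E_1_6_5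
    have z_1_2 : a 1 2 = 0 := by linear_combination -E_0_2_2 - E_0_3_3 - E_0_4_4 - E_0_5_5
    have z_1_3 : a 1 3 = 0 := by linear_combination E_0_2_1
    have z_1_4 : a 1 4 = 0 := by linear_combination E_0_3_1
    have z_1_5 : a 1 5 = 0 := by linear_combination E_0_4_1
    have z_1_6 : a 1 6 = 0 := by linear_combination -E_0_6_2
    have z_2_2 : a 2 2 = 0 := by linear_combination E_0_1_2 - 2 * E_0_1_3 + (1/2) * E_0_2_3 - 2 * E_0_2_4 + (1/2) * E_0_3_4 - 2 * E_0_3_5 - 2 * E_0_4_5 - (5/2) * E_0_5_5 + (1/2) * E_1_2_6 + (5/2) * E_1_6_4 - 2 * E_1_6_5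
    have z_2_3 : a 2 3 = 0 := by linear_combination -E_0_3_3 - E_0_4_4 - E_0_5_5
    have z_2_4 : a 2 4 = 0 := by linear_combination E_0_2_1 + E_0_3_2
    have z_2_5 : a 2 5 = 0 := by linear_combination E_0_3_1 + E_0_4_2
    have z_2_6 : a 2 6 = 0 := by linear_combination -E_0_6_3
    have z_3_3 : a 3 3 = 0 := by linear_combination E_0_1_2 - 3 * E_0_1_3 + (3/2) * E_0_2_3 - 3 * E_0_2_4 + (1/2) * E_0_3_4 - 3 * E_0_3_5 - 3 * E_0_4_5 - (7/2) * E_0_5_5 + (1/2) * E_1_2_6 + (7/2) * E_1_6_4 - 3 * E_1_6_5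
    have z_3_4 : a 3 4 = 0 := by linear_combination -E_0_4_4 - E_0_5_5
    have z_3_5 : a 3 5 = 0 := by linear_combination E_0_2_1 + E_0_3_2 + E_0_4_3
    have z_3_6 : a 3 6 = 0 := by linear_combination E_0_1_6 - E_0_6_4 + E_0_6_5 - E_1_2_4
    have z_4_4 : a 4 4 = 0 := by linear_combination E_0_1_2 - 4 * E_0_1_3 + (3/2) * E_0_2_3 - 4 * E_0_2_4 + (3/2) * E_0_3_4 - 4 * E_0_3_5 - 4 * E_0_4_5 - (9/2) * E_0_5_5 + (1/2) * E_1_2_6 + (9/2) * E_1_6_4 - 4 * E_1_6_5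
    have z_4_5 : a 4 5 = 0 := by linear_combination -E_0_5_5
    have z_5_5 : a 5 5 = 0 := by linear_combination E_0_1_2 - 5 * E_0_1_3 + (3/2) * E_0_2_3 - 5 * E_0_2_4 + (3/2) * E_0_3_4 - 5 * E_0_3_5 - 4 * E_0_4_5 - (11/2) * E_0_5_5 + (1/2) * E_1_2_6 + (11/2) * E_1_6_4 - 5 * E_1_6_5
    have z_6_3 : a 6 3 = 0 := by linear_combination -E_0_1_6 + E_0_2_6 - E_0_6_5 + E_1_2_4
    have z_6_4 : a 6 4 = 0 := by linear_combination E_0_3_6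
    have z_6_5 : a 6 5 = 0 := by linear_combination E_0_4_6
    have z_6_6 : a 6 6 = 0 := by linear_combination E_0_1_2 - 3 * E_0_1_3 + E_0_2_3 - 3 * E_0_2_4 + E_0_3_4 - 3 * E_0_3_5 - 3 * E_0_4_5 - 4 * E_0_5_5 + 4 * E_1_6_4 - 3 * E_1_6_5
    -- reduced formulas for D on the basis
    have hr0 : D (b 0) = a 2 0 • b 2 + a 3 0 • b 3 + a 4 0 • b 4 + a 5 0 • b 5 + a 6 0 • b 6 := by
      rw [hD 0, z_0_0, z_1_0]; module
    have hr1 : D (b 1) = a 2 1 • b 2 + a 3 1 • b 3 + a 4 1 • b 4 + a 5 1 • b 5 + a 6 1 • b 6 := by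
      rw [hD 1, z_0_1, z_1_1]; module
    have hr2 : D (b 2) = a 3 2 • b 3 + a 4 2 • b 4 + a 5 2 • b 5 + a 6 2 • b 6 := by
      rw [hD 2, z_0_2, z_1_2, z_2_2]; module
    have hr3 : D (b 3) = a 4 3 • b 4 + a 5 3 • b 5 := by
      rw [hD 3, z_0_3, z_1_3, z_2_3, z_3_3, z_6_3]; module
    have hr4 : D (b 4) = a 5 4 • b 5 := by
      rw [hD 4, z_0_4, z_1_4, z_2_4, z_3_4, z_4_4, z_6_4]; module
    have hr5 : D (b 5) = 0 := by
      rw [hD 5, z_0_5, z_1_5, z_2_5, z_3_5, z_4_5, z_5_5, z_6_5]; module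
    have hr6 : D (b 6) = a 4 6 • b 4 + a 5 6 • b 5 := by
      rw [hD 6, z_0_6, z_1_6, z_2_6, z_3_6, z_6_6]; module
    have P : ∀ x : g, (D.toLinearMap ^ 5) x = D (D (D (D (D x)))) := by
      intro x
      simp only [pow_succ, pow_zero, Module.End.mul_apply, Module.End.one_apply]
      rfl
    refine ⟨5, LinearMap.ext fun x => ?_⟩
    have hx := b.sum_repr x
    rw [Fin.sum_univ_seven] at hx
    rw [← hx]
    simp only [LinearMap.zero_apply, P, map_add, map_smul, hr0, hr1, hr2, hr3, hr4, hr5, hr6,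
      smul_add, smul_smul, smul_zero, map_zero, add_zero, zero_add]
  refine ⟨?_, main⟩
  haveI : Module.Finite ℂ g := Module.Finite.of_basis b
  show LieRing.IsNilpotent g
  rw [LieAlgebra.isNilpotent_iff_forall (R := ℂ)]
  intro x
  have h := main (LieDerivation.ad ℂ g x)
  have he : (LieDerivation.ad ℂ g x).toLinearMap = LieAlgebra.ad ℂ g x := by
    ext y
    simp
  rwa [he] at h
end

section
/- A finite direct sum of Lie algebra ideals g = g_1 ⊕ ... ⊕ g_k is characteristically nilpotent if and only if each summand g_i is characteristically nilpotent. -/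
open DirectSum

section Aux

variable {k : ℕ} {g : Fin k → Type*} [∀ i, LieRing (g i)] [∀ i, LieAlgebra ℂ (g i)]

/-- Bracket with an element supported on one component. -/
lemma aux_lie_of_right (i : Fin k) (a : ⨁ i, g i) (y : g i) :
    ⁅a, DirectSum.of g i y⁆ = DirectSum.of g i ⁅a i, y⁆ := by
  refine DFinsupp.ext fun j => ?_
  rw [DirectSum.bracket_apply]
  obtain rfl | h := eq_or_ne i j
  · rw [DirectSum.of_eq_same, DirectSum.of_eq_same]
  · rw [DirectSum.of_eq_of_ne _ _ _ h.symm, DirectSum.of_eq_of_ne _ _ _ h.symm, lie_zero]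

lemma aux_of_smul (i : Fin k) (c : ℂ) (a : g i) :
    DirectSum.of g i (c • a) = c • DirectSum.of g i a := by
  rw [← DirectSum.lof_eq_of ℂ, ← DirectSum.lof_eq_of ℂ, map_smul]

/-- Every central element lies in the span of brackets, when all derivations are nilpotent. -/
lemma aux_central_mem {V : Type*} [LieRing V] [LieAlgebra ℂ V]
    (h : ∀ D : LieDerivation ℂ V V, IsNilpotent D.toLinearMap)
    (z : V) (hz : ∀ w : V, ⁅z, w⁆ = 0) :
    z ∈ Submodule.span ℂ {x | ∃ a b : V, ⁅a, b⁆ = x} := by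
  set C : Submodule ℂ V := Submodule.span ℂ {x | ∃ a b : V, ⁅a, b⁆ = x} with hC
  by_cases hzC : z ∈ C
  · exact hzC
  exfalso
  have hq : (Submodule.Quotient.mk z : V ⧸ C) ≠ 0 := by
    simpa [Submodule.Quotient.mk_eq_zero] using hzC
  obtain ⟨φ, hφ⟩ : ∃ φ : Module.Dual ℂ (V ⧸ C), φ (Submodule.Quotient.mk z) ≠ 0 := by
    by_contra hc
    push_neg at hc
    exact hq ((Module.forall_dual_apply_eq_zero_iff ℂ _).mp hc)
  set f : V →ₗ[ℂ] ℂ := (φ (Submodule.Quotient.mk z))⁻¹ • (φ ∘ₗ C.mkQ) with hf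
  have hfz : f z = 1 := by
    simp only [hf, LinearMap.smul_apply, LinearMap.comp_apply, Submodule.mkQ_apply,
      smul_eq_mul]
    exact inv_mul_cancel₀ hφ
  have hfC : ∀ x ∈ C, f x = 0 := by
    intro x hx
    simp only [hf, LinearMap.smul_apply, LinearMap.comp_apply, Submodule.mkQ_apply,
      smul_eq_mul]
    rw [(Submodule.Quotient.mk_eq_zero C).mpr hx, map_zero, mul_zero]
  set E : LieDerivation ℂ V V :=
    { toLinearMap := (LinearMap.smulRight f z)
      leibniz' := by
        intro a b
        have h1 : f ⁅a, b⁆ = 0 := hfC _ (Submodule.subset_span ⟨a, b, rfl⟩)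
        have h2 : ⁅a, z⁆ = 0 := by rw [← lie_skew, hz, neg_zero]
        have h3 : ⁅b, z⁆ = 0 := by rw [← lie_skew, hz, neg_zero]
        simp [LinearMap.smulRight, h1, h2, h3] }
    with hE
  obtain ⟨n, hn⟩ := h E
  have hEz : ∀ m : ℕ, (E.toLinearMap ^ m) z = z := by
    intro m
    induction m with
    | zero => simp
    | succ m ih =>
      rw [pow_succ', Module.End.mul_apply, ih]
      show f z • z = z
      rw [hfz, one_smul]
  have : z = 0 := by rw [← hEz n, hn, LinearMap.zero_apply]
  rw [this] at hzC
  exact hzC (Submodule.zero_mem C)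

end Aux

/-- A finite direct sum of Lie algebras is characteristically nilpotent if and only if
each summand is characteristically nilpotent. -/
theorem directSum_characteristically_nilpotent_iff (k : ℕ) (g : Fin k → Type*)
    [∀ i, LieRing (g i)] [∀ i, LieAlgebra ℂ (g i)] :
    (∀ D : LieDerivation ℂ (⨁ i, g i) (⨁ i, g i), IsNilpotent D.toLinearMap) ↔
      ∀ i, ∀ D : LieDerivation ℂ (g i) (g i), IsNilpotent D.toLinearMap := by
  constructor
  · -- easy direction
    intro h i D
    set E : LieDerivation ℂ (⨁ i, g i) (⨁ i, g i) :=
      { toLinearMap :=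
          (DirectSum.lof ℂ (Fin k) g i) ∘ₗ D.toLinearMap ∘ₗ (DirectSum.component ℂ (Fin k) g i)
        leibniz' := by
          intro a b
          show DirectSum.of g i (D ⁅a i, b i⁆) =
              ⁅a, DirectSum.of g i (D (b i))⁆ - ⁅b, DirectSum.of g i (D (a i))⁆
          rw [D.apply_lie_eq_sub, map_sub, aux_lie_of_right, aux_lie_of_right] }
      with hEdef
    obtain ⟨n, hn⟩ := h E
    have key : ∀ (m : ℕ) (x : g i),
        (E.toLinearMap ^ m) (DirectSum.of g i x) =
          DirectSum.of g i ((D.toLinearMap ^ m) x) := by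
      intro m
      induction m with
      | zero => intro x; simp
      | succ m ih =>
        intro x
        rw [pow_succ', Module.End.mul_apply, pow_succ', Module.End.mul_apply, ih]
        show DirectSum.of g i (D ((DirectSum.of g i ((D.toLinearMap ^ m) x)) i)) = _
        rw [DirectSum.of_eq_same]; rfl
    refine ⟨n, ?_⟩
    ext x
    have := key n x
    rw [hn, LinearMap.zero_apply] at this
    have := congrArg (fun y => (y : ⨁ i, g i) i) this.symm
    simpa using this
  · intro h D
    classical
    set C : ∀ i : Fin k, Submodule ℂ (g i) :=
      fun i => Submodule.span ℂ {x | ∃ a b : g i, ⁅a, b⁆ = x} with hCdef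
    -- the diagonal blocks of D, as derivations of the summands
    set Dd : ∀ i : Fin k, LieDerivation ℂ (g i) (g i) := fun i =>
      { toLinearMap :=
          (DirectSum.component ℂ (Fin k) g i) ∘ₗ D.toLinearMap ∘ₗ (DirectSum.lof ℂ (Fin k) g i)
        leibniz' := by
          intro a b
          show (D ((DirectSum.of g i) ⁅a, b⁆)) i = _
          rw [← DirectSum.lie_of_same, D.apply_lie_eq_sub]
          show (⁅DirectSum.of g i a, D (DirectSum.of g i b)⁆
              - ⁅DirectSum.of g i b, D (DirectSum.of g i a)⁆) i = _
          rw [DFinsupp.sub_apply, DirectSum.bracket_apply, DirectSum.bracket_apply,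
            DirectSum.of_eq_same, DirectSum.of_eq_same]
          rfl } with hDddef
    have hDd_apply : ∀ (i : Fin k) (x : g i),
        (Dd i).toLinearMap x = (D.toLinearMap (DirectSum.of g i x)) i := fun _ _ => rfl
    -- off-diagonal components of D are central
    have offdiag_central : ∀ {i j : Fin k}, i ≠ j → ∀ (x : g j) (w : g i),
        ⁅(D.toLinearMap (DirectSum.of g j x)) i, w⁆ = 0 := by
      intro i j hij x w
      have h0 : ⁅DirectSum.of g j x, DirectSum.of g i w⁆ = (0 : ⨁ i, g i) :=
        DirectSum.lie_of_of_ne g hij.symm x w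
      have h1 := D.apply_lie_eq_sub (DirectSum.of g j x) (DirectSum.of g i w)
      rw [h0, map_zero] at h1
      have h2 := congrArg (fun y : ⨁ i, g i => y i) h1.symm
      simp only [DirectSum.zero_apply] at h2
      rw [DFinsupp.sub_apply, DirectSum.bracket_apply, DirectSum.bracket_apply,
        DirectSum.of_eq_of_ne _ _ _ hij, zero_lie, DirectSum.of_eq_same, zero_sub] at h2
      have h3 : ⁅w, (D.toLinearMap (DirectSum.of g j x)) i⁆ = 0 := by
        exact neg_eq_zero.mp h2
      rw [← lie_skew, h3, neg_zero]
    have offdiag_in_C : ∀ {i j : Fin k}, i ≠ j → ∀ x : g j,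
        (D.toLinearMap (DirectSum.of g j x)) i ∈ C i := by
      intro i j hij x
      exact aux_central_mem (h i) _ (offdiag_central hij x)
    -- the diagonal blocks preserve the span of brackets
    have Dd_maps_C : ∀ (i : Fin k), ∀ x ∈ C i, (Dd i).toLinearMap x ∈ C i := by
      intro i x hx
      refine Submodule.span_induction ?_ ?_ ?_ ?_ hx
      · rintro _ ⟨a, b, rfl⟩
        have := (Dd i).apply_lie_eq_sub a b
        show (Dd i).toLinearMap ⁅a, b⁆ ∈ C i
        rw [show (Dd i).toLinearMap ⁅a, b⁆ = (Dd i) ⁅a, b⁆ from rfl, this]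
        refine sub_mem ?_ ?_ <;> exact Submodule.subset_span ⟨_, _, rfl⟩
      · rw [map_zero]; exact Submodule.zero_mem _
      · intro a b _ _ ha hb; rw [map_add]; exact Submodule.add_mem _ ha hb
      · intro c a _ ha; rw [map_smul]; exact Submodule.smul_mem _ _ ha
    -- off-diagonal components kill the span of brackets
    have offdiag_kills_C : ∀ {i j : Fin k}, i ≠ j → ∀ x ∈ C j,
        (D.toLinearMap (DirectSum.of g j x)) i = 0 := by
      intro i j hij x hx
      refine Submodule.span_induction ?_ ?_ ?_ ?_ hx
      · rintro _ ⟨a, b, rfl⟩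
        rw [show D.toLinearMap (DirectSum.of g j ⁅a, b⁆) = D (DirectSum.of g j ⁅a, b⁆) from rfl,
          ← DirectSum.lie_of_same, D.apply_lie_eq_sub]
        rw [DFinsupp.sub_apply, DirectSum.bracket_apply, DirectSum.bracket_apply,
          DirectSum.of_eq_of_ne _ _ _ hij, DirectSum.of_eq_of_ne _ _ _ hij,
          zero_lie, zero_lie, sub_zero]
      · rw [map_zero, map_zero]; rfl
      · intro a b _ _ ha hb
        rw [map_add, map_add, DFinsupp.add_apply, ha, hb, add_zero]
      · intro c a _ ha
        rw [aux_of_smul, map_smul, DFinsupp.smul_apply, ha, smul_zero]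
    -- the ideal generated by all the bracket spans
    set A : Submodule ℂ (⨁ i, g i) :=
      Submodule.span ℂ {y | ∃ j x, x ∈ C j ∧ DirectSum.of g j x = y} with hAdef
    have memA_of : ∀ x : ⨁ i, g i, (∀ i, x i ∈ C i) → x ∈ A := by
      intro x hx
      rw [← DirectSum.sum_univ_of x]
      exact Submodule.sum_mem _ fun i _ => Submodule.subset_span ⟨i, x i, hx i, rfl⟩
    have key1 : ∀ (j : Fin k) (y : g j),
        D.toLinearMap (DirectSum.of g j y) - DirectSum.of g j ((Dd j).toLinearMap y) ∈ A := by
      intro j y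
      apply memA_of
      intro i
      rw [DFinsupp.sub_apply]
      obtain rfl | hij := eq_or_ne i j
      · rw [DirectSum.of_eq_same, hDd_apply, sub_self]; exact Submodule.zero_mem _
      · rw [DirectSum.of_eq_of_ne _ _ _ hij, sub_zero]
        exact offdiag_in_C hij y
    have key2 : ∀ (j : Fin k), ∀ x ∈ C j,
        D.toLinearMap (DirectSum.of g j x) = DirectSum.of g j ((Dd j).toLinearMap x) := by
      intro j x hx
      refine DFinsupp.ext fun i => ?_
      obtain rfl | hij := eq_or_ne i j
      · rw [DirectSum.of_eq_same, hDd_apply]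
      · rw [DirectSum.of_eq_of_ne _ _ _ hij]
        exact offdiag_kills_C hij x hx
    have A_inv : ∀ y ∈ A, D.toLinearMap y ∈ A := by
      intro y hy
      refine Submodule.span_induction ?_ ?_ ?_ ?_ hy
      · rintro _ ⟨j, x, hx, rfl⟩
        rw [key2 j x hx]
        exact Submodule.subset_span ⟨j, _, Dd_maps_C j x hx, rfl⟩
      · rw [map_zero]; exact Submodule.zero_mem _
      · intro a b _ _ ha hb; rw [map_add]; exact Submodule.add_mem _ ha hb
      · intro c a _ ha; rw [map_smul]; exact Submodule.smul_mem _ _ ha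
    have Cpow : ∀ (j : Fin k), ∀ x ∈ C j, ∀ nn : ℕ, ((Dd j).toLinearMap ^ nn) x ∈ C j := by
      intro j x hx nn
      induction nn with
      | zero => simpa using hx
      | succ nn ih =>
        rw [pow_succ', Module.End.mul_apply]
        exact Dd_maps_C j _ ih
    -- uniform nilpotency bound for the diagonal blocks
    choose n hn using fun i => h i (Dd i)
    set m : ℕ := Finset.univ.sup n with hmdef
    have hm : ∀ i : Fin k, (Dd i).toLinearMap ^ m = 0 := fun i =>
      pow_eq_zero_of_le (Finset.le_sup (Finset.mem_univ i)) (hn i)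
    -- the block-diagonal approximation of powers of D
    set T : ℕ → (⨁ i, g i) → (⨁ i, g i) := fun nn x =>
      ∑ j, DirectSum.of g j (((Dd j).toLinearMap ^ nn) (x j)) with hTdef
    have P : ∀ (nn : ℕ) (x : ⨁ i, g i), (D.toLinearMap ^ nn) x - T nn x ∈ A := by
      intro nn
      induction nn with
      | zero =>
        intro x
        simp only [hTdef, pow_zero, Module.End.one_apply]
        rw [DirectSum.sum_univ_of x, sub_self]
        exact Submodule.zero_mem _
      | succ nn ih =>
        intro x
        have hsum : (D.toLinearMap ^ (nn + 1)) x - T (nn + 1) x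
            = D.toLinearMap ((D.toLinearMap ^ nn) x - T nn x)
              + ∑ j, (D.toLinearMap (DirectSum.of g j (((Dd j).toLinearMap ^ nn) (x j)))
                  - DirectSum.of g j (((Dd j).toLinearMap ^ (nn + 1)) (x j))) := by
          rw [map_sub, Finset.sum_sub_distrib, ← map_sum]
          have h1 : (D.toLinearMap ^ (nn + 1)) x = D.toLinearMap ((D.toLinearMap ^ nn) x) := by
            rw [pow_succ', Module.End.mul_apply]
          rw [h1]
          show _ = _ + (D.toLinearMap (T nn x) - T (nn + 1) x)
          abel
        rw [hsum]
        refine Submodule.add_mem _ (A_inv _ (ih x)) (Submodule.sum_mem _ fun j _ => ?_)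
        have h2 : ((Dd j).toLinearMap ^ (nn + 1)) (x j)
            = (Dd j).toLinearMap (((Dd j).toLinearMap ^ nn) (x j)) := by
          rw [pow_succ', Module.End.mul_apply]
        rw [h2]
        exact key1 j _
    have Q : ∀ (nn : ℕ) (j : Fin k), ∀ x ∈ C j,
        (D.toLinearMap ^ nn) (DirectSum.of g j x)
          = DirectSum.of g j (((Dd j).toLinearMap ^ nn) x) := by
      intro nn j x hx
      induction nn with
      | zero => simp
      | succ nn ih =>
        rw [pow_succ', Module.End.mul_apply, pow_succ', Module.End.mul_apply, ih,
          key2 j _ (Cpow j x hx nn)]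
    have A_killed : ∀ y ∈ A, (D.toLinearMap ^ m) y = 0 := by
      intro y hy
      refine Submodule.span_induction ?_ ?_ ?_ ?_ hy
      · rintro _ ⟨j, x, hx, rfl⟩
        rw [Q m j x hx, hm j, LinearMap.zero_apply, map_zero]
      · rw [map_zero]
      · intro a b _ _ ha hb; rw [map_add, ha, hb, add_zero]
      · intro c a _ ha; rw [map_smul, ha, smul_zero]
    refine ⟨m + m, LinearMap.ext fun x => ?_⟩
    show (D.toLinearMap ^ (m + m)) x = 0
    rw [pow_add, Module.End.mul_apply]
    apply A_killed
    have hT0 : T m x = 0 := by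
      simp only [hTdef, hm, LinearMap.zero_apply, map_zero, Finset.sum_const_zero]
    have := P m x
    rwa [hT0, sub_zero] at this
end

section
/- The bracket defined on ℂ^7 with basis X_1,...,X_6, Y_1 by [X_1,X_j] = X_{j+1} for j = 2,3,4,5; [X_4,X_2] = α X_6; [X_3,X_2] = Y_1 + α X_5; [Y_1,X_3] = X_6; [Y_1,X_2] = X_5 + X_6 (other brackets zero or by antisymmetry) satisfies the Jacobi identity for every complex number α; in particular it defines a Lie algebra, and this Lie algebra is nilpotent. -/
/-- The bracket on `ℂ^7` (coordinates `X_1,...,X_6, Y_1`) defined by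
`⁅X_1,X_j⁆ = X_{j+1}` (`j = 2,3,4,5`), `⁅X_4,X_2⁆ = α X_6`, `⁅X_3,X_2⁆ = Y_1 + α X_5`,
`⁅Y_1,X_3⁆ = X_6`, `⁅Y_1,X_2⁆ = X_5 + X_6`, extended bilinearly and antisymmetrically. -/
noncomputable def g766Bracket (α : ℂ) (x y : Fin 7 → ℂ) : Fin 7 → ℂ := fun k =>
  if k = 2 then x 0 * y 1 - x 1 * y 0
  else if k = 3 then x 0 * y 2 - x 2 * y 0
  else if k = 4 then
    x 0 * y 3 - x 3 * y 0 + α * (x 2 * y 1 - x 1 * y 2) + (x 6 * y 1 - x 1 * y 6)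
  else if k = 5 then
    x 0 * y 4 - x 4 * y 0 + α * (x 3 * y 1 - x 1 * y 3)
      + (x 6 * y 2 - x 2 * y 6) + (x 6 * y 1 - x 1 * y 6)
  else if k = 6 then x 2 * y 1 - x 1 * y 2
  else 0

lemma g766_lvl1 (α : ℂ) (x y : Fin 7 → ℂ) :
    g766Bracket α x y 0 = 0 ∧ g766Bracket α x y 1 = 0 := by
  constructor <;> simp [g766Bracket]

lemma g766_lvl2 (α : ℂ) (x y : Fin 7 → ℂ) (h0 : x 0 = 0) (h1 : x 1 = 0) :
    g766Bracket α x y 2 = 0 := by simp [g766Bracket, h0, h1]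

lemma g766_lvl3 (α : ℂ) (x y : Fin 7 → ℂ) (h0 : x 0 = 0) (h1 : x 1 = 0) (h2 : x 2 = 0) :
    g766Bracket α x y 3 = 0 ∧ g766Bracket α x y 6 = 0 := by
  constructor <;> simp [g766Bracket, h0, h1, h2]

lemma g766_lvl4 (α : ℂ) (x y : Fin 7 → ℂ) (h0 : x 0 = 0) (h1 : x 1 = 0) (h2 : x 2 = 0)
    (h3 : x 3 = 0) (h6 : x 6 = 0) : g766Bracket α x y 4 = 0 := by
  simp [g766Bracket, h0, h1, h2, h3, h6]

lemma g766_lvl5 (α : ℂ) (x y : Fin 7 → ℂ) (h0 : x 0 = 0) (h1 : x 1 = 0) (h2 : x 2 = 0)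
    (h3 : x 3 = 0) (h4 : x 4 = 0) (h6 : x 6 = 0) : g766Bracket α x y = 0 := by
  funext k; fin_cases k <;> simp [g766Bracket, h0, h1, h2, h3, h4, h6]

/-- For every `α : ℂ`, the bracket above is antisymmetric and satisfies the Jacobi
identity (hence defines a Lie algebra), and this Lie algebra is nilpotent: all
left-normed six-fold brackets vanish. -/
theorem g766Bracket_jacobi_and_nilpotent (α : ℂ) :
    (∀ x y : Fin 7 → ℂ, g766Bracket α x y = - g766Bracket α y x) ∧
    (∀ x y z : Fin 7 → ℂ,
      g766Bracket α x (g766Bracket α y z) + g766Bracket α y (g766Bracket α z x)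
        + g766Bracket α z (g766Bracket α x y) = 0) ∧
    (∀ x₁ x₂ x₃ x₄ x₅ x₆ : Fin 7 → ℂ,
      g766Bracket α (g766Bracket α (g766Bracket α (g766Bracket α
        (g766Bracket α x₁ x₂) x₃) x₄) x₅) x₆ = 0) := by
  refine ⟨?_, ?_, ?_⟩
  · intro x y; funext k
    simp only [g766Bracket, Pi.neg_apply]; split_ifs <;> ring
  · intro x y z; funext k
    fin_cases k <;> simp [g766Bracket] <;> ring
  · intro x₁ x₂ x₃ x₄ x₅ x₆
    set v1 := g766Bracket α x₁ x₂ with hv1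
    set v2 := g766Bracket α v1 x₃ with hv2
    set v3 := g766Bracket α v2 x₄ with hv3
    set v4 := g766Bracket α v3 x₅ with hv4
    obtain ⟨h10, h11⟩ := g766_lvl1 α x₁ x₂
    obtain ⟨h20, h21⟩ := g766_lvl1 α v1 x₃
    have h22 := g766_lvl2 α v1 x₃ h10 h11
    obtain ⟨h30, h31⟩ := g766_lvl1 α v2 x₄
    have h32 := g766_lvl2 α v2 x₄ h20 h21
    obtain ⟨h33, h36⟩ := g766_lvl3 α v2 x₄ h20 h21 h22
    obtain ⟨h40, h41⟩ := g766_lvl1 α v3 x₅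
    have h42 := g766_lvl2 α v3 x₅ h30 h31
    obtain ⟨h43, h46⟩ := g766_lvl3 α v3 x₅ h30 h31 h32
    have h44 := g766_lvl4 α v3 x₅ h30 h31 h32 h33 h36
    exact g766_lvl5 α v4 x₆ h40 h41 h42 h43 h44 h46
end

section
/- The 2m-dimensional complex Lie algebra g_{2m}^2 (m ≥ 4) with basis X_1,...,X_6, Y_1,...,Y_{2m-6} and nonzero brackets [X_1,X_j] = X_{j+1} for j = 2,3,4,5; [X_5,X_2] = [X_3,X_4] = Y_1; [X_3,X_2] = Y_2; [Y_{2t-1},Y_{2t}] = X_6 for 2 ≤ t ≤ m-3 has derived algebra [g,g] of dimension 6, spanned by X_3, X_4, X_5, X_6, Y_1, Y_2, and has center of dimension 3. -/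
lemma sum_lie' {g : Type*} [LieRing g] {ι : Type*} (s : Finset ι) (f : ι → g) (y : g) :
    ⁅∑ i ∈ s, f i, y⁆ = ∑ i ∈ s, ⁅f i, y⁆ :=
  map_sum (AddMonoidHom.mk' (fun x => ⁅x, y⁆) (fun a b => add_lie a b y)) f s

lemma lie_sum' {g : Type*} [LieRing g] {ι : Type*} (s : Finset ι) (f : ι → g) (y : g) :
    ⁅y, ∑ i ∈ s, f i⁆ = ∑ i ∈ s, ⁅y, f i⁆ :=
  map_sum (AddMonoidHom.mk' (fun x => ⁅y, x⁆) (fun a b => lie_add y a b)) f s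

lemma aux_lie_mem {g : Type*} [LieRing g] [LieAlgebra ℂ g] {ι : Type*} [Fintype ι]
    (b : Module.Basis ι ℂ g) (p : Submodule ℂ g) (h : ∀ i j, ⁅b i, b j⁆ ∈ p) (x y : g) :
    ⁅x, y⁆ ∈ p := by
  rw [← b.sum_repr x, ← b.sum_repr y, sum_lie']
  refine Submodule.sum_mem _ fun i _ => ?_
  rw [smul_lie]
  refine p.smul_mem _ ?_
  rw [lie_sum']
  refine Submodule.sum_mem _ fun j _ => ?_
  rw [lie_smul]
  exact p.smul_mem _ (h i j)

lemma aux_central {g : Type*} [LieRing g] [LieAlgebra ℂ g] {ι : Type*} [Fintype ι]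
    (b : Module.Basis ι ℂ g) (w : g) (h : ∀ i, ⁅b i, w⁆ = 0) (x : g) : ⁅x, w⁆ = 0 := by
  rw [← b.sum_repr x, sum_lie']
  simp [smul_lie, h]

lemma aux_key {g : Type*} [LieRing g] [LieAlgebra ℂ g] {ι : Type*} [Fintype ι]
    (b : Module.Basis ι ℂ g) (z : g) (i : ι) :
    ∑ k, b.repr z k • ⁅b i, b k⁆ = ⁅b i, z⁆ := by
  conv_rhs => rw [← b.sum_repr z]
  rw [lie_sum']
  simp [lie_smul]

/-- For the `2m`-dimensional Lie algebra `g_{2m}^2` (`m ≥ 4`; basis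
`X_1,...,X_6, Y_1,...,Y_{2m-6}`; nonzero brackets `⁅X_1,X_j⁆ = X_{j+1}` (`j = 2,3,4,5`),
`⁅X_5,X_2⁆ = ⁅X_3,X_4⁆ = Y_1`, `⁅X_3,X_2⁆ = Y_2`, `⁅Y_{2t-1},Y_{2t}⁆ = X_6` for
`2 ≤ t ≤ m-3`), the derived algebra has dimension `6` and is spanned by
`X_3, X_4, X_5, X_6, Y_1, Y_2`, and the center has dimension `3`. -/
theorem g2m_2_derived_and_center (m : ℕ) (hm : 4 ≤ m) (g : Type*) [LieRing g]
    [LieAlgebra ℂ g] (b : Module.Basis (Fin 6 ⊕ Fin (2 * m - 6)) ℂ g)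
    (h01 : ⁅b (Sum.inl 0), b (Sum.inl 1)⁆ = b (Sum.inl 2))
    (h02 : ⁅b (Sum.inl 0), b (Sum.inl 2)⁆ = b (Sum.inl 3))
    (h03 : ⁅b (Sum.inl 0), b (Sum.inl 3)⁆ = b (Sum.inl 4))
    (h04 : ⁅b (Sum.inl 0), b (Sum.inl 4)⁆ = b (Sum.inl 5))
    (h05 : ⁅b (Sum.inl 0), b (Sum.inl 5)⁆ = 0)
    (h41 : ⁅b (Sum.inl 4), b (Sum.inl 1)⁆ = b (Sum.inr ⟨0, by omega⟩))
    (h23 : ⁅b (Sum.inl 2), b (Sum.inl 3)⁆ = b (Sum.inr ⟨0, by omega⟩))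
    (h21 : ⁅b (Sum.inl 2), b (Sum.inl 1)⁆ = b (Sum.inr ⟨1, by omega⟩))
    (h13 : ⁅b (Sum.inl 1), b (Sum.inl 3)⁆ = 0)
    (h15 : ⁅b (Sum.inl 1), b (Sum.inl 5)⁆ = 0)
    (h24 : ⁅b (Sum.inl 2), b (Sum.inl 4)⁆ = 0)
    (h25 : ⁅b (Sum.inl 2), b (Sum.inl 5)⁆ = 0)
    (h34 : ⁅b (Sum.inl 3), b (Sum.inl 4)⁆ = 0)
    (h35 : ⁅b (Sum.inl 3), b (Sum.inl 5)⁆ = 0)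
    (h45 : ⁅b (Sum.inl 4), b (Sum.inl 5)⁆ = 0)
    (hXY : ∀ (j : Fin 6) (i : Fin (2 * m - 6)), ⁅b (Sum.inl j), b (Sum.inr i)⁆ = 0)
    (hYY1 : ∀ i j : Fin (2 * m - 6), (i : ℕ) % 2 = 0 → 2 ≤ (i : ℕ) →
      (j : ℕ) = (i : ℕ) + 1 → ⁅b (Sum.inr i), b (Sum.inr j)⁆ = b (Sum.inl 5))
    (hYY0 : ∀ i j : Fin (2 * m - 6),
      ¬ ((i : ℕ) % 2 = 0 ∧ 2 ≤ (i : ℕ) ∧ (j : ℕ) = (i : ℕ) + 1) →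
      ¬ ((j : ℕ) % 2 = 0 ∧ 2 ≤ (j : ℕ) ∧ (i : ℕ) = (j : ℕ) + 1) →
      ⁅b (Sum.inr i), b (Sum.inr j)⁆ = 0) :
    (LieAlgebra.derivedSeries ℂ g 1).toSubmodule =
      Submodule.span ℂ {b (Sum.inl 2), b (Sum.inl 3), b (Sum.inl 4), b (Sum.inl 5),
        b (Sum.inr ⟨0, by omega⟩), b (Sum.inr ⟨1, by omega⟩)} ∧
    Module.finrank ℂ (LieAlgebra.derivedSeries ℂ g 1).toSubmodule = 6 ∧
    Module.finrank ℂ (LieAlgebra.center ℂ g).toSubmodule = 3 := by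
  have hn0 : (0:ℕ) < 2 * m - 6 := by omega
  have hn1 : (1:ℕ) < 2 * m - 6 := by omega
  -- reversed brackets
  have h10 : ⁅b (Sum.inl 1), b (Sum.inl 0)⁆ = -b (Sum.inl 2) := by
    rw [← h01, ← lie_skew]
  have h20 : ⁅b (Sum.inl 2), b (Sum.inl 0)⁆ = -b (Sum.inl 3) := by
    rw [← h02, ← lie_skew]
  have h30 : ⁅b (Sum.inl 3), b (Sum.inl 0)⁆ = -b (Sum.inl 4) := by
    rw [← h03, ← lie_skew]
  have h40 : ⁅b (Sum.inl 4), b (Sum.inl 0)⁆ = -b (Sum.inl 5) := by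
    rw [← h04, ← lie_skew]
  have h50 : ⁅b (Sum.inl 5), b (Sum.inl 0)⁆ = 0 := by
    rw [← lie_skew, h05, neg_zero]
  have h14 : ⁅b (Sum.inl 1), b (Sum.inl 4)⁆ = -b (Sum.inr ⟨0, hn0⟩) := by
    rw [← h41, ← lie_skew]
  have h32 : ⁅b (Sum.inl 3), b (Sum.inl 2)⁆ = -b (Sum.inr ⟨0, hn0⟩) := by
    rw [← h23, ← lie_skew]
  have h12 : ⁅b (Sum.inl 1), b (Sum.inl 2)⁆ = -b (Sum.inr ⟨1, hn1⟩) := by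
    rw [← h21, ← lie_skew]
  have h31 : ⁅b (Sum.inl 3), b (Sum.inl 1)⁆ = 0 := by rw [← lie_skew, h13, neg_zero]
  have h51 : ⁅b (Sum.inl 5), b (Sum.inl 1)⁆ = 0 := by rw [← lie_skew, h15, neg_zero]
  have h42 : ⁅b (Sum.inl 4), b (Sum.inl 2)⁆ = 0 := by rw [← lie_skew, h24, neg_zero]
  have h52 : ⁅b (Sum.inl 5), b (Sum.inl 2)⁆ = 0 := by rw [← lie_skew, h25, neg_zero]
  have h43 : ⁅b (Sum.inl 4), b (Sum.inl 3)⁆ = 0 := by rw [← lie_skew, h34, neg_zero]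
  have h53 : ⁅b (Sum.inl 5), b (Sum.inl 3)⁆ = 0 := by rw [← lie_skew, h35, neg_zero]
  have h54 : ⁅b (Sum.inl 5), b (Sum.inl 4)⁆ = 0 := by rw [← lie_skew, h45, neg_zero]
  have hYX : ∀ (i : Fin 6) (j : Fin (2 * m - 6)),
      ⁅b (Sum.inr j), b (Sum.inl i)⁆ = 0 := fun i j => by
    rw [← lie_skew, hXY, neg_zero]
  have e0' : (⟨0, by norm_num⟩ : Fin 6) = 0 := rfl
  have e1' : (⟨1, by norm_num⟩ : Fin 6) = 1 := rfl
  have e2' : (⟨2, by norm_num⟩ : Fin 6) = 2 := rfl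
  have e3' : (⟨3, by norm_num⟩ : Fin 6) = 3 := rfl
  have e4' : (⟨4, by norm_num⟩ : Fin 6) = 4 := rfl
  have e5' : (⟨5, by norm_num⟩ : Fin 6) = 5 := rfl
  set S : Set g := {b (Sum.inl 2), b (Sum.inl 3), b (Sum.inl 4), b (Sum.inl 5),
      b (Sum.inr ⟨0, hn0⟩), b (Sum.inr ⟨1, hn1⟩)} with hSdef
  -- every bracket of basis vectors lies in span S
  have hSmem : ∀ i j, ⁅b i, b j⁆ ∈ Submodule.span ℂ S := by
    rintro (i | i) (j | j)
    · fin_cases i <;> fin_cases j <;>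
        simp only [e0', e1', e2', e3', e4', e5', h01, h02, h03, h04, h05, h41, h23, h21, h13, h15, h24, h25,
          h34, h35, h45, h10, h20, h30, h40, h50, h12, h14, h31, h32, h51, h42, h52, h43,
          h53, h54, lie_self] <;>
        first
          | exact Submodule.zero_mem _
          | (apply Submodule.subset_span; simp [hSdef]; done)
          | (apply Submodule.neg_mem; apply Submodule.subset_span; simp [hSdef]; done)
    · rw [hXY]; exact Submodule.zero_mem _
    · rw [hYX]; exact Submodule.zero_mem _
    · by_cases hc1 : (i : ℕ) % 2 = 0 ∧ 2 ≤ (i : ℕ) ∧ (j : ℕ) = (i : ℕ) + 1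
      · rw [hYY1 i j hc1.1 hc1.2.1 hc1.2.2]
        exact Submodule.subset_span (by simp [hSdef])
      · by_cases hc2 : (j : ℕ) % 2 = 0 ∧ 2 ≤ (j : ℕ) ∧ (i : ℕ) = (j : ℕ) + 1
        · rw [← lie_skew, hYY1 j i hc2.1 hc2.2.1 hc2.2.2]
          exact Submodule.neg_mem _ (Submodule.subset_span (by simp [hSdef]))
        · rw [hYY0 i j hc1 hc2]; exact Submodule.zero_mem _
  have hDeq : LieAlgebra.derivedSeries ℂ g 1 = ⁅(⊤ : LieIdeal ℂ g), (⊤ : LieIdeal ℂ g)⁆ := by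
    rw [LieAlgebra.derivedSeries_def, LieAlgebra.derivedSeriesOfIdeal_succ,
      LieAlgebra.derivedSeriesOfIdeal_zero]
  have hD : (LieAlgebra.derivedSeries ℂ g 1).toSubmodule = Submodule.span ℂ S := by
    rw [hDeq]
    apply le_antisymm
    · rw [LieSubmodule.lieIdeal_oper_eq_linear_span']
      rw [Submodule.span_le]
      rintro _ ⟨x, -, y, -, rfl⟩
      exact aux_lie_mem b _ hSmem x y
    · rw [Submodule.span_le]
      intro v hv
      have hmem : ∀ x y : g, ⁅x, y⁆ ∈
          ((⁅(⊤ : LieIdeal ℂ g), (⊤ : LieIdeal ℂ g)⁆ : LieIdeal ℂ g) : Submodule ℂ g) := by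
        intro x y
        exact (LieSubmodule.mem_toSubmodule _).mpr
          (LieSubmodule.lie_mem_lie (LieSubmodule.mem_top _) (LieSubmodule.mem_top _))
      simp only [hSdef, Set.mem_insert_iff, Set.mem_singleton_iff] at hv
      rcases hv with rfl | rfl | rfl | rfl | rfl | rfl
      · rw [← h01]; exact hmem _ _
      · rw [← h02]; exact hmem _ _
      · rw [← h03]; exact hmem _ _
      · rw [← h04]; exact hmem _ _
      · rw [← h23]; exact hmem _ _
      · rw [← h21]; exact hmem _ _
  refine ⟨hD, ?_, ?_⟩
  · -- dimension 6
    set f : Fin 6 → (Fin 6 ⊕ Fin (2 * m - 6)) :=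
      ![Sum.inl 2, Sum.inl 3, Sum.inl 4, Sum.inl 5, Sum.inr ⟨0, hn0⟩, Sum.inr ⟨1, hn1⟩]
      with hfdef
    have hfinj : Function.Injective f := by
      have hleft : Function.LeftInverse
          (fun t : Fin 6 ⊕ Fin (2 * m - 6) => match t with
            | .inl i => if i = 2 then (0 : Fin 6) else if i = 3 then 1 else
                if i = 4 then 2 else 3
            | .inr k => if (k : ℕ) = 0 then (4 : Fin 6) else 5) f := by
        intro a
        fin_cases a <;> rfl
      exact hleft.injective
    have hli : LinearIndependent ℂ (b ∘ f) := b.linearIndependent.comp f hfinj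
    have hrange : Set.range (b ∘ f) = S := by
      ext w
      simp only [Set.range_comp, hfdef, Matrix.range_cons, Matrix.range_empty,
        Set.union_empty, Set.image_union, Set.image_singleton, hSdef]
      simp only [Set.mem_union, Set.mem_singleton_iff, Set.mem_insert_iff]
    rw [hD, ← hrange, finrank_span_eq_card hli, Fintype.card_fin]
  · -- center
    set T : Set g := {b (Sum.inl 5), b (Sum.inr ⟨0, hn0⟩), b (Sum.inr ⟨1, hn1⟩)} with hTdef
    have hC : (LieAlgebra.center ℂ g).toSubmodule = Submodule.span ℂ T := by
      apply le_antisymm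
      · intro z hz
        have hz' : ∀ x : g, ⁅x, z⁆ = 0 := by
          exact (LieModule.mem_maxTrivSubmodule ℂ g g z).mp ((LieSubmodule.mem_toSubmodule _).mp hz)
        have key : ∀ i, ∑ k, b.repr z k • ⁅b i, b k⁆ = 0 := fun i => by
          rw [aux_key]; exact hz' (b i)
        -- coefficients on X side
        have e0 := key (Sum.inl 0)
        rw [Fintype.sum_sum_type, Fin.sum_univ_six] at e0
        simp only [hXY, smul_zero, Finset.sum_const_zero, add_zero, lie_self,
          h01, h02, h03, h04, h05, zero_add] at e0
        have hc1 : b.repr z (Sum.inl 1) = 0 := by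
          have := congrArg (fun w => b.repr w (Sum.inl 2)) e0
          simpa [Module.Basis.repr_self, Finsupp.single_apply] using this
        have hc2 : b.repr z (Sum.inl 2) = 0 := by
          have := congrArg (fun w => b.repr w (Sum.inl 3)) e0
          simpa [Module.Basis.repr_self, Finsupp.single_apply] using this
        have hc3 : b.repr z (Sum.inl 3) = 0 := by
          have := congrArg (fun w => b.repr w (Sum.inl 4)) e0
          simpa [Module.Basis.repr_self, Finsupp.single_apply] using this
        have hc4 : b.repr z (Sum.inl 4) = 0 := by
          have := congrArg (fun w => b.repr w (Sum.inl 5)) e0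
          simpa [Module.Basis.repr_self, Finsupp.single_apply] using this
        have e1 := key (Sum.inl 1)
        rw [Fintype.sum_sum_type, Fin.sum_univ_six] at e1
        simp only [hXY, smul_zero, Finset.sum_const_zero, add_zero, lie_self,
          h10, h12, h13, h14, h15, zero_add] at e1
        have hc0 : b.repr z (Sum.inl 0) = 0 := by
          have := congrArg (fun w => b.repr w (Sum.inl 2)) e1
          simpa [Module.Basis.repr_self, Finsupp.single_apply] using this
        -- coefficients on Y side, indices ≥ 2
        have hcr : ∀ k : Fin (2 * m - 6), 2 ≤ (k : ℕ) → b.repr z (Sum.inr k) = 0 := by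
          intro k hk2
          rcases Nat.mod_two_eq_zero_or_one (k : ℕ) with hpar | hpar
          · have hk1 : (k : ℕ) + 1 < 2 * m - 6 := by have := k.isLt; omega
            set j : Fin (2 * m - 6) := ⟨(k : ℕ) + 1, hk1⟩ with hjdef
            have e := key (Sum.inr j)
            rw [Fintype.sum_sum_type] at e
            simp only [hYX, smul_zero, Finset.sum_const_zero, zero_add] at e
            rw [Finset.sum_eq_single k
              (fun k' _ hne => by
                rw [hYY0 j k'
                  (by rintro ⟨hq, -, -⟩; simp only [hjdef] at hq; omega)
                  (by
                    rintro ⟨-, -, hq⟩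
                    simp only [hjdef] at hq
                    exact hne (Fin.ext (by omega)))]
                rw [smul_zero])
              (fun hnot => absurd (Finset.mem_univ k) hnot)] at e
            rw [← lie_skew, hYY1 k j hpar hk2 rfl] at e
            rcases smul_eq_zero.mp e with h | h
            · exact h
            · exact absurd (neg_eq_zero.mp h) (b.ne_zero _)
          · have hk1 : (k : ℕ) - 1 < 2 * m - 6 := by have := k.isLt; omega
            set j : Fin (2 * m - 6) := ⟨(k : ℕ) - 1, hk1⟩ with hjdef
            have e := key (Sum.inr j)
            rw [Fintype.sum_sum_type] at e
            simp only [hYX, smul_zero, Finset.sum_const_zero, zero_add] at e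
            rw [Finset.sum_eq_single k
              (fun k' _ hne => by
                rw [hYY0 j k'
                  (by
                    rintro ⟨-, -, hq⟩
                    simp only [hjdef] at hq
                    exact hne (Fin.ext (by omega)))
                  (by rintro ⟨hq1, -, hq⟩; simp only [hjdef] at hq; omega)]
                rw [smul_zero])
              (fun hnot => absurd (Finset.mem_univ k) hnot)] at e
            rw [hYY1 j k (by simp only [hjdef]; omega) (by simp only [hjdef]; omega)
              (by simp only [hjdef]; omega)] at e
            rcases smul_eq_zero.mp e with h | h
            · exact h
            · exact absurd h (b.ne_zero _)
        -- conclude z ∈ span T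
        rw [← b.sum_repr z]
        refine Submodule.sum_mem _ ?_
        rintro (i | k) -
        · fin_cases i <;> simp only [e0', e1', e2', e3', e4', e5']
          · rw [hc0, zero_smul]; exact Submodule.zero_mem _
          · rw [hc1, zero_smul]; exact Submodule.zero_mem _
          · rw [hc2, zero_smul]; exact Submodule.zero_mem _
          · rw [hc3, zero_smul]; exact Submodule.zero_mem _
          · rw [hc4, zero_smul]; exact Submodule.zero_mem _
          · exact Submodule.smul_mem _ _ (Submodule.subset_span (by simp [hTdef]))
        · by_cases hk : 2 ≤ (k : ℕ)
          · rw [hcr k hk, zero_smul]; exact Submodule.zero_mem _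
          · have : (k : ℕ) = 0 ∨ (k : ℕ) = 1 := by omega
            rcases this with h0 | h1
            · have : k = ⟨0, hn0⟩ := Fin.ext h0
              rw [this]
              exact Submodule.smul_mem _ _ (Submodule.subset_span (by simp [hTdef]))
            · have : k = ⟨1, hn1⟩ := Fin.ext h1
              rw [this]
              exact Submodule.smul_mem _ _ (Submodule.subset_span (by simp [hTdef]))
      · rw [Submodule.span_le]
        intro v hv
        simp only [hTdef, Set.mem_insert_iff, Set.mem_singleton_iff] at hv
        have hcent : ∀ w : g, (∀ i, ⁅b i, w⁆ = 0) →
            w ∈ (LieAlgebra.center ℂ g).toSubmodule := by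
          intro w hw
          exact (LieSubmodule.mem_toSubmodule _).mpr
            ((LieModule.mem_maxTrivSubmodule ℂ g g w).mpr (aux_central b w hw))
        rcases hv with rfl | rfl | rfl
        · refine hcent _ ?_
          rintro (i | j)
          · fin_cases i
            · exact h05
            · exact h15
            · exact h25
            · exact h35
            · exact h45
            · exact lie_self _
          · exact hYX _ _
        · refine hcent _ ?_
          rintro (i | j)
          · exact hXY _ _
          · exact hYY0 _ _ (by rintro ⟨-, -, hq⟩; simp at hq)
              (by rintro ⟨-, hq, -⟩; simp at hq)
        · refine hcent _ ?_
          rintro (i | j)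
          · exact hXY _ _
          · exact hYY0 _ _ (by rintro ⟨-, hq2, hq⟩; simp at hq; omega)
              (by rintro ⟨hq, -, -⟩; simp at hq)
    -- dimension 3
    set f3 : Fin 3 → (Fin 6 ⊕ Fin (2 * m - 6)) :=
      ![Sum.inl 5, Sum.inr ⟨0, hn0⟩, Sum.inr ⟨1, hn1⟩] with hf3def
    have hf3inj : Function.Injective f3 := by
      have hleft : Function.LeftInverse
          (fun t : Fin 6 ⊕ Fin (2 * m - 6) => match t with
            | .inl _ => (0 : Fin 3)
            | .inr k => if (k : ℕ) = 0 then (1 : Fin 3) else 2) f3 := by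
        intro a
        fin_cases a <;> rfl
      exact hleft.injective
    have hli3 : LinearIndependent ℂ (b ∘ f3) := b.linearIndependent.comp f3 hf3inj
    have hrange3 : Set.range (b ∘ f3) = T := by
      ext w
      simp only [Set.range_comp, hf3def, Matrix.range_cons, Matrix.range_empty,
        Set.union_empty, Set.image_union, Set.image_singleton, hTdef]
      simp only [Set.mem_union, Set.mem_singleton_iff, Set.mem_insert_iff]
    rw [hC, ← hrange3, finrank_span_eq_card hli3, Fintype.card_fin]
end

section
/- The Lie algebras g_8^{6} and g_8^{8} are not isomorphic, where g_8^6 has basis X_1,...,X_6,Y_1,Y_2 with nonzero brackets [X_1,X_j]=X_{j+1} (j=2,...,5), [X_3,X_2]=Y_1, [Y_1,X_3]=X_6, [Y_1,X_2]=X_5+X_6, [Y_2,X_2]=X_6, and g_8^8 has the same brackets except [Y_1,X_2]=X_5 (without the X_6 term). -/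
set_option maxHeartbeats 1000000


/-- The 8-dimensional Lie algebras `g_8^6` and `g_8^8` are not isomorphic: they share
the brackets `⁅X_1,X_j⁆ = X_{j+1}` (`j = 2,3,4,5`), `⁅X_3,X_2⁆ = Y_1`, `⁅Y_1,X_3⁆ = X_6`,
`⁅Y_2,X_2⁆ = X_6`, but `⁅Y_1,X_2⁆ = X_5 + X_6` in `g_8^6` while `⁅Y_1,X_2⁆ = X_5` in
`g_8^8`. -/
theorem g8_6_not_iso_g8_8 (g g' : Type*) [LieRing g] [LieAlgebra ℂ g]
    [LieRing g'] [LieAlgebra ℂ g'] (b : Module.Basis (Fin 8) ℂ g) (b' : Module.Basis (Fin 8) ℂ g')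
    (h01 : ⁅b 0, b 1⁆ = b 2) (h02 : ⁅b 0, b 2⁆ = b 3) (h03 : ⁅b 0, b 3⁆ = b 4)
    (h04 : ⁅b 0, b 4⁆ = b 5) (h05 : ⁅b 0, b 5⁆ = 0) (h06 : ⁅b 0, b 6⁆ = 0)
    (h07 : ⁅b 0, b 7⁆ = 0)
    (h21 : ⁅b 2, b 1⁆ = b 6) (h62 : ⁅b 6, b 2⁆ = b 5) (h61 : ⁅b 6, b 1⁆ = b 4 + b 5)
    (h71 : ⁅b 7, b 1⁆ = b 5)
    (h13 : ⁅b 1, b 3⁆ = 0) (h14 : ⁅b 1, b 4⁆ = 0) (h15 : ⁅b 1, b 5⁆ = 0)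
    (h23 : ⁅b 2, b 3⁆ = 0) (h24 : ⁅b 2, b 4⁆ = 0) (h25 : ⁅b 2, b 5⁆ = 0)
    (h27 : ⁅b 2, b 7⁆ = 0)
    (h34 : ⁅b 3, b 4⁆ = 0) (h35 : ⁅b 3, b 5⁆ = 0) (h36 : ⁅b 3, b 6⁆ = 0)
    (h37 : ⁅b 3, b 7⁆ = 0)
    (h45 : ⁅b 4, b 5⁆ = 0) (h46 : ⁅b 4, b 6⁆ = 0) (h47 : ⁅b 4, b 7⁆ = 0)
    (h56 : ⁅b 5, b 6⁆ = 0) (h57 : ⁅b 5, b 7⁆ = 0) (h67 : ⁅b 6, b 7⁆ = 0)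
    (h01' : ⁅b' 0, b' 1⁆ = b' 2) (h02' : ⁅b' 0, b' 2⁆ = b' 3) (h03' : ⁅b' 0, b' 3⁆ = b' 4)
    (h04' : ⁅b' 0, b' 4⁆ = b' 5) (h05' : ⁅b' 0, b' 5⁆ = 0) (h06' : ⁅b' 0, b' 6⁆ = 0)
    (h07' : ⁅b' 0, b' 7⁆ = 0)
    (h21' : ⁅b' 2, b' 1⁆ = b' 6) (h62' : ⁅b' 6, b' 2⁆ = b' 5) (h61' : ⁅b' 6, b' 1⁆ = b' 4)
    (h71' : ⁅b' 7, b' 1⁆ = b' 5)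
    (h13' : ⁅b' 1, b' 3⁆ = 0) (h14' : ⁅b' 1, b' 4⁆ = 0) (h15' : ⁅b' 1, b' 5⁆ = 0)
    (h23' : ⁅b' 2, b' 3⁆ = 0) (h24' : ⁅b' 2, b' 4⁆ = 0) (h25' : ⁅b' 2, b' 5⁆ = 0)
    (h27' : ⁅b' 2, b' 7⁆ = 0)
    (h34' : ⁅b' 3, b' 4⁆ = 0) (h35' : ⁅b' 3, b' 5⁆ = 0) (h36' : ⁅b' 3, b' 6⁆ = 0)
    (h37' : ⁅b' 3, b' 7⁆ = 0)
    (h45' : ⁅b' 4, b' 5⁆ = 0) (h46' : ⁅b' 4, b' 6⁆ = 0) (h47' : ⁅b' 4, b' 7⁆ = 0)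
    (h56' : ⁅b' 5, b' 6⁆ = 0) (h57' : ⁅b' 5, b' 7⁆ = 0) (h67' : ⁅b' 6, b' 7⁆ = 0) :
    ¬ Nonempty (g ≃ₗ⁅ℂ⁆ g') := by
  rintro ⟨e⟩
  have t10 : ⁅b' 1, b' 0⁆ = -(b' 2) := by rw [← lie_skew, h01']
  have t12 : ⁅b' 1, b' 2⁆ = -(b' 6) := by rw [← lie_skew, h21']
  have t16 : ⁅b' 1, b' 6⁆ = -(b' 4) := by rw [← lie_skew, h61']
  have t17 : ⁅b' 1, b' 7⁆ = -(b' 5) := by rw [← lie_skew, h71']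
  have t20 : ⁅b' 2, b' 0⁆ = -(b' 3) := by rw [← lie_skew, h02']
  have t26 : ⁅b' 2, b' 6⁆ = -(b' 5) := by rw [← lie_skew, h62']
  have t30 : ⁅b' 3, b' 0⁆ = -(b' 4) := by rw [← lie_skew, h03']
  have t31 : ⁅b' 3, b' 1⁆ = 0 := by rw [← lie_skew, h13', neg_zero]
  have t32 : ⁅b' 3, b' 2⁆ = 0 := by rw [← lie_skew, h23', neg_zero]
  have t40 : ⁅b' 4, b' 0⁆ = -(b' 5) := by rw [← lie_skew, h04']
  have t41 : ⁅b' 4, b' 1⁆ = 0 := by rw [← lie_skew, h14', neg_zero]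
  have t42 : ⁅b' 4, b' 2⁆ = 0 := by rw [← lie_skew, h24', neg_zero]
  have t43 : ⁅b' 4, b' 3⁆ = 0 := by rw [← lie_skew, h34', neg_zero]
  have t50 : ⁅b' 5, b' 0⁆ = 0 := by rw [← lie_skew, h05', neg_zero]
  have t51 : ⁅b' 5, b' 1⁆ = 0 := by rw [← lie_skew, h15', neg_zero]
  have t52 : ⁅b' 5, b' 2⁆ = 0 := by rw [← lie_skew, h25', neg_zero]
  have t53 : ⁅b' 5, b' 3⁆ = 0 := by rw [← lie_skew, h35', neg_zero]
  have t54 : ⁅b' 5, b' 4⁆ = 0 := by rw [← lie_skew, h45', neg_zero]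
  have t60 : ⁅b' 6, b' 0⁆ = 0 := by rw [← lie_skew, h06', neg_zero]
  have t63 : ⁅b' 6, b' 3⁆ = 0 := by rw [← lie_skew, h36', neg_zero]
  have t64 : ⁅b' 6, b' 4⁆ = 0 := by rw [← lie_skew, h46', neg_zero]
  have t65 : ⁅b' 6, b' 5⁆ = 0 := by rw [← lie_skew, h56', neg_zero]
  have t70 : ⁅b' 7, b' 0⁆ = 0 := by rw [← lie_skew, h07', neg_zero]
  have t72 : ⁅b' 7, b' 2⁆ = 0 := by rw [← lie_skew, h27', neg_zero]
  have t73 : ⁅b' 7, b' 3⁆ = 0 := by rw [← lie_skew, h37', neg_zero]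
  have t74 : ⁅b' 7, b' 4⁆ = 0 := by rw [← lie_skew, h47', neg_zero]
  have t75 : ⁅b' 7, b' 5⁆ = 0 := by rw [← lie_skew, h57', neg_zero]
  have t76 : ⁅b' 7, b' 6⁆ = 0 := by rw [← lie_skew, h67', neg_zero]
  have key : ∀ x y : g', ⁅x, y⁆ =
      (b'.repr x 0 * b'.repr y 1 - b'.repr y 0 * b'.repr x 1) • b' 2
    + (b'.repr x 0 * b'.repr y 2 - b'.repr y 0 * b'.repr x 2) • b' 3
    + (b'.repr x 0 * b'.repr y 3 - b'.repr y 0 * b'.repr x 3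
        + b'.repr x 6 * b'.repr y 1 - b'.repr y 6 * b'.repr x 1) • b' 4
    + (b'.repr x 0 * b'.repr y 4 - b'.repr y 0 * b'.repr x 4
        + b'.repr x 6 * b'.repr y 2 - b'.repr y 6 * b'.repr x 2
        + b'.repr x 7 * b'.repr y 1 - b'.repr y 7 * b'.repr x 1) • b' 5
    + (b'.repr x 2 * b'.repr y 1 - b'.repr y 2 * b'.repr x 1) • b' 6 := by
    intro x y
    conv_lhs => rw [← b'.sum_repr x, ← b'.sum_repr y]
    simp only [Fin.sum_univ_eight, add_lie, lie_add, smul_lie, lie_smul, lie_self,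
      h01', h02', h03', h04', h05', h06', h07', h21', h62', h61', h71', h13', h14', h15', h23', h24', h25', h27', h34', h35', h36', h37', h45', h46', h47', h56', h57', h67', t10, t12, t16, t17, t20, t26, t30, t31, t32, t40, t41, t42, t43, t50, t51, t52, t53, t54, t60, t63, t64, t65, t70, t72, t73, t74, t75, t76, smul_zero, smul_neg, add_zero, zero_add]
    module
  have L0 : ∀ x y : g', b'.repr ⁅x,y⁆ 0 = (0:ℂ) := by
    intro x y; rw [key]; simp [Module.Basis.repr_self_apply, Finsupp.single_apply]
  have L1 : ∀ x y : g', b'.repr ⁅x,y⁆ 1 = (0:ℂ) := by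
    intro x y; rw [key]; simp [Module.Basis.repr_self_apply, Finsupp.single_apply]
  have L2 : ∀ x y : g', b'.repr ⁅x,y⁆ 2 = b'.repr x 0 * b'.repr y 1 - b'.repr y 0 * b'.repr x 1 := by
    intro x y; rw [key]; simp [Module.Basis.repr_self_apply, Finsupp.single_apply]
  have L3 : ∀ x y : g', b'.repr ⁅x,y⁆ 3 = b'.repr x 0 * b'.repr y 2 - b'.repr y 0 * b'.repr x 2 := by
    intro x y; rw [key]; simp [Module.Basis.repr_self_apply, Finsupp.single_apply]
  have L4 : ∀ x y : g', b'.repr ⁅x,y⁆ 4 = b'.repr x 0 * b'.repr y 3 - b'.repr y 0 * b'.repr x 3 + b'.repr x 6 * b'.repr y 1 - b'.repr y 6 * b'.repr x 1 := by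
    intro x y; rw [key]; simp [Module.Basis.repr_self_apply, Finsupp.single_apply]
  have L5 : ∀ x y : g', b'.repr ⁅x,y⁆ 5 = b'.repr x 0 * b'.repr y 4 - b'.repr y 0 * b'.repr x 4 + b'.repr x 6 * b'.repr y 2 - b'.repr y 6 * b'.repr x 2 + b'.repr x 7 * b'.repr y 1 - b'.repr y 7 * b'.repr x 1 := by
    intro x y; rw [key]; simp [Module.Basis.repr_self_apply, Finsupp.single_apply]
  have L6 : ∀ x y : g', b'.repr ⁅x,y⁆ 6 = b'.repr x 2 * b'.repr y 1 - b'.repr y 2 * b'.repr x 1 := by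
    intro x y; rw [key]; simp [Module.Basis.repr_self_apply, Finsupp.single_apply]
  have L7 : ∀ x y : g', b'.repr ⁅x,y⁆ 7 = (0:ℂ) := by
    intro x y; rw [key]; simp [Module.Basis.repr_self_apply, Finsupp.single_apply]
  have E : ∀ x y : g, e ⁅x, y⁆ = ⁅e x, e y⁆ := fun x y => LieEquiv.map_lie e x y
  have h0map : e (0 : g) = 0 := e.toLinearEquiv.map_zero
  set x0 : g' := e (b 0) with hdx0
  set x1 : g' := e (b 1) with hdx1
  set x2 : g' := e (b 2) with hdx2
  set x3 : g' := e (b 3) with hdx3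
  set x4 : g' := e (b 4) with hdx4
  set x5 : g' := e (b 5) with hdx5
  set x6 : g' := e (b 6) with hdx6
  have E01 : ⁅x0, x1⁆ = x2 := by rw [← E, h01]
  have E02 : ⁅x0, x2⁆ = x3 := by rw [← E, h02]
  have E03 : ⁅x0, x3⁆ = x4 := by rw [← E, h03]
  have E04 : ⁅x0, x4⁆ = x5 := by rw [← E, h04]
  have E21 : ⁅x2, x1⁆ = x6 := by rw [← E, h21]
  have E62 : ⁅x6, x2⁆ = x5 := by rw [← E, h62]
  have E61 : ⁅x6, x1⁆ = x4 + x5 := by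
    rw [← E, h61]; exact e.toLinearEquiv.map_add _ _
  have E13 : ⁅x1, x3⁆ = 0 := by rw [← E, h13, h0map]
  have E23 : ⁅x2, x3⁆ = 0 := by rw [← E, h23, h0map]
  -- shape facts
  have hx20 : b'.repr x2 0 = 0 := by rw [← E01]; exact L0 x0 x1
  have hx21 : b'.repr x2 1 = 0 := by rw [← E01]; exact L1 x0 x1
  have hx27 : b'.repr x2 7 = 0 := by rw [← E01]; exact L7 x0 x1
  have hx30 : b'.repr x3 0 = 0 := by rw [← E02]; exact L0 x0 x2
  have hx31 : b'.repr x3 1 = 0 := by rw [← E02]; exact L1 x0 x2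
  have hx37 : b'.repr x3 7 = 0 := by rw [← E02]; exact L7 x0 x2
  have hx32 : b'.repr x3 2 = 0 := by
    rw [← E02, L2, hx20, hx21]; ring
  have hx60 : b'.repr x6 0 = 0 := by rw [← E21]; exact L0 x2 x1
  have hx61 : b'.repr x6 1 = 0 := by rw [← E21]; exact L1 x2 x1
  have hx67 : b'.repr x6 7 = 0 := by rw [← E21]; exact L7 x2 x1
  have hx62 : b'.repr x6 2 = 0 := by
    rw [← E21, L2, hx20, hx21]; ring
  have hx40 : b'.repr x4 0 = 0 := by rw [← E03]; exact L0 x0 x3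
  have hx41 : b'.repr x4 1 = 0 := by rw [← E03]; exact L1 x0 x3
  have hx47 : b'.repr x4 7 = 0 := by rw [← E03]; exact L7 x0 x3
  have hx42 : b'.repr x4 2 = 0 := by
    rw [← E03, L2, hx30, hx31]; ring
  have hx46 : b'.repr x4 6 = 0 := by
    rw [← E03, L6, hx31, hx32]; ring
  -- s = c * β1
  have hs : b'.repr x6 6 = b'.repr x2 2 * b'.repr x1 1 := by
    have h := L6 x2 x1
    rw [E21, hx21] at h
    linear_combination h
  -- x5 as multiple of b' 5
  have hx5eq : x5 = (b'.repr x6 6 * b'.repr x2 2) • b' 5 := by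
    rw [← E62, key x6 x2]
    simp only [hx60, hx61, hx62, hx67, hx20, hx21, hx27]
    module
  have hsc : b'.repr x6 6 * b'.repr x2 2 ≠ 0 := by
    intro h
    rw [h, zero_smul] at hx5eq
    exact b.ne_zero 5 (e.injective (hx5eq.trans h0map.symm))
  have hs0 : b'.repr x6 6 ≠ 0 := left_ne_zero_of_mul hsc
  have hc : b'.repr x2 2 ≠ 0 := right_ne_zero_of_mul hsc
  -- x3 has no e6 component
  have hx36 : b'.repr x3 6 = 0 := by
    have h := L5 x2 x3
    rw [E23, hx20, hx30, hx32, hx27, hx37] at h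
    have h' : b'.repr x3 6 * b'.repr x2 2 = 0 := by
      have h0 : b'.repr (0 : g') (5 : Fin 8) = 0 := by simp
      rw [h0] at h
      linear_combination h
    rcases mul_eq_zero.mp h' with h'' | h''
    · exact h''
    · exact absurd h'' hc
  -- β0 = 0
  have hβ0 : b'.repr x0 1 = 0 := by
    have h := L6 x0 x2
    rw [E02, hx36, hx21] at h
    have h' : b'.repr x2 2 * b'.repr x0 1 = 0 := by linear_combination h
    rcases mul_eq_zero.mp h' with h'' | h''
    · exact absurd h'' hc
    · exact h''
  -- c = α * β1
  have hcval : b'.repr x2 2 = b'.repr x0 0 * b'.repr x1 1 := by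
    have h := L2 x0 x1
    rw [E01, hβ0] at h
    linear_combination h
  have hα : b'.repr x0 0 ≠ 0 := by
    intro h
    rw [hcval, h, zero_mul] at hc
    exact hc rfl
  -- m = α * c
  have hm : b'.repr x3 3 = b'.repr x0 0 * b'.repr x2 2 := by
    have h := L3 x0 x2
    rw [E02, hx20] at h
    linear_combination h
  have hm0 : b'.repr x3 3 ≠ 0 := by
    rw [hm]; exact mul_ne_zero hα hc
  -- α1 = 0
  have hα1 : b'.repr x1 0 = 0 := by
    have h := L4 x1 x3
    rw [E13, hx30, hx31, hx36] at h
    have h0 : b'.repr (0 : g') (4 : Fin 8) = 0 := by simp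
    rw [h0] at h
    have h' : b'.repr x1 0 * b'.repr x3 3 = 0 := by linear_combination -h
    rcases mul_eq_zero.mp h' with h'' | h''
    · exact h''
    · exact absurd h'' hm0
  -- d = α * b2
  have hd : b'.repr x2 3 = b'.repr x0 0 * b'.repr x1 2 := by
    have h := L3 x0 x1
    rw [E01, hα1] at h
    linear_combination h
  -- n = α * d
  have hn : b'.repr x3 4 = b'.repr x0 0 * b'.repr x2 3 := by
    have h := L4 x0 x2
    rw [E02, hx20, hx21, hβ0] at h
    linear_combination h
  -- μ = α * m
  have hx44 : b'.repr x4 4 = b'.repr x0 0 * b'.repr x3 3 := by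
    have h := L4 x0 x3
    rw [E03, hx30, hx31, hx36] at h
    linear_combination h
  -- ν = α * n
  have hx45 : b'.repr x4 5 = b'.repr x0 0 * b'.repr x3 4 := by
    have h := L5 x0 x3
    rw [E03, hx30, hx31, hx32, hx36, hx37] at h
    linear_combination h
  -- λ = s * c  (coordinate 5 of x5 via E62)
  have hx55 : b'.repr x5 5 = b'.repr x6 6 * b'.repr x2 2 := by
    have h := L5 x6 x2
    rw [E62, hx60, hx61, hx62, hx67, hx20, hx27] at h
    linear_combination h
  -- λ = α * μ  (coordinate 5 of x5 via E04)
  have hx55b : b'.repr x5 5 = b'.repr x0 0 * b'.repr x4 4 := by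
    have h := L5 x0 x4
    rw [E04, hx40, hx41, hx42, hx46, hx47] at h
    linear_combination h
  -- s = α ^ 3
  have hs3 : b'.repr x6 6 = b'.repr x0 0 ^ 3 := by
    have h : b'.repr x6 6 * b'.repr x2 2
        = b'.repr x0 0 ^ 3 * b'.repr x2 2 := by
      rw [← hx55, hx55b, hx44, hm]; ring
    exact mul_right_cancel₀ hc h
  -- coordinate 5 of E61
  have hfin : b'.repr x4 5 + b'.repr x5 5 = b'.repr x6 6 * b'.repr x1 2 := by
    have h := L5 x6 x1
    rw [E61, hx60, hx61, hx62, hx67, hα1] at h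
    have hadd : b'.repr (x4 + x5) (5 : Fin 8)
        = b'.repr x4 5 + b'.repr x5 5 := by simp
    rw [hadd] at h
    linear_combination h
  -- contradiction
  rw [hx45, hn, hd, hx55, hs3, hcval] at hfin
  have : b'.repr x0 0 ^ 3 * (b'.repr x0 0 * b'.repr x1 1) = 0 := by
    linear_combination hfin
  rcases mul_eq_zero.mp this with h'' | h''
  · exact pow_ne_zero 3 hα h''
  · rw [hcval] at hc; exact hc h''
end
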